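/- arXiv:1906.02581 — 7 statements merged into one kernel-verified Lean document; each statement's English description precedes it below -/
import Mathlib

section
/- For n qubits, let e₀ = |0…0⟩ be the first computational basis vector of ℂ^{2^n} and let u = F e₀ = 2^{−n/2} Σ_j e_j be the uniform superposition. Define H^A_s = I_{2^n} − (1−s)·|u⟩⟨u| − s·|e₀⟩⟨e₀| for s ∈ [0,1]. Then the minimum over s ∈ [0,1] of the gap between the second-smallest and smallest eigenvalues of H^A_s equals 2^{−n/2}, attained at s = 1/2. -/
/-- The eigenvalues of a Hermitian matrix, sorted in nondecreasing order
(counted with multiplicity). -/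
noncomputable def sortedEigs {m : Type*} [Fintype m] [DecidableEq m] {A : Matrix m m ℂ}
    (hA : A.IsHermitian) : Fin (Fintype.card m) → ℝ :=
  hA.eigenvalues₀ ∘ Tuple.sort hA.eigenvalues₀

open Matrix Polynomial in
theorem detlem (N : ℕ) (hN : 2 ≤ N) (α β γ : ℂ) (hα : α ≠ 0) (i0 : Fin N)
    (e₀ : Fin N → ℂ) (he₀ : e₀ = fun j => if j = i0 then 1 else 0) :
    det (α • (1 : Matrix (Fin N) (Fin N) ℂ)
        + Matrix.of (fun j k => β + γ * e₀ j * e₀ k))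
      = α ^ (N - 2) * (α^2 + α * ((N : ℂ) * β + γ) + β * γ * ((N : ℂ) - 1)) := by
  set U : Matrix (Fin N) (Fin 2) ℂ := Matrix.of (fun j t => if t = 0 then 1 else e₀ j) with hU
  set V : Matrix (Fin 2) (Fin N) ℂ := Matrix.of (fun t k => if t = 0 then β else γ * e₀ k) with hV
  have hUV : Matrix.of (fun j k => β + γ * e₀ j * e₀ k) = U * V := by
    ext j k
    simp only [hU, hV, Matrix.mul_apply, Fin.sum_univ_two, Matrix.of_apply, he₀]
    by_cases hj : j = i0 <;> by_cases hk : k = i0 <;> simp [hj, hk] <;> ring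
  have hdet1 : IsUnit (α • (1 : Matrix (Fin N) (Fin N) ℂ)).det := by
    simp [Matrix.det_smul, isUnit_iff_ne_zero, hα]
  rw [hUV, Matrix.det_add_mul U V hdet1]
  have hinv : (α • (1 : Matrix (Fin N) (Fin N) ℂ))⁻¹ = α⁻¹ • (1 : Matrix (Fin N) (Fin N) ℂ) := by
    apply Matrix.inv_eq_right_inv
    rw [Matrix.smul_mul, Matrix.mul_smul, one_mul, smul_smul, mul_inv_cancel₀ hα, one_smul]
  rw [hinv]
  have hVU : V * (α⁻¹ • (1 : Matrix (Fin N) (Fin N) ℂ)) * U = α⁻¹ • (V * U) := by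
    rw [Matrix.mul_smul, Matrix.mul_one, Matrix.smul_mul]
  rw [hVU]
  have hVU2 : V * U = Matrix.of (fun t t' : Fin 2 =>
      if t = 0 then (if t' = 0 then (N : ℂ) * β else β) else γ) := by
    ext t t'
    fin_cases t <;> fin_cases t' <;>
      simp [hU, hV, Matrix.mul_apply, he₀, Finset.sum_ite_eq', mul_comm, Finset.mul_sum] <;>
      simp [Finset.sum_ite_eq', apply_ite, mul_comm]
  rw [hVU2, Matrix.det_smul, Matrix.det_one, Matrix.det_fin_two]
  simp only [Matrix.add_apply, Matrix.smul_apply, Matrix.of_apply, Matrix.one_apply, smul_eq_mul]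
  norm_num
  have hNsplit : α ^ N = α ^ (N - 2) * α ^ 2 := by rw [← pow_add]; congr 1; omega
  have hcard : Fintype.card (Fin 2) = 2 := by simp
  rw [hNsplit]
  field_simp
  ring
open Matrix in
theorem det_sub_eq_prod {N : Type*} [Fintype N] [DecidableEq N]
    {A : Matrix N N ℂ} (hA : A.IsHermitian) (x : ℂ) :
    det (x • (1 : Matrix N N ℂ) - A) = ∏ i, (x - (hA.eigenvalues i : ℂ)) := by
  set U : Matrix N N ℂ := (hA.eigenvectorUnitary : Matrix N N ℂ) with hUdef
  have hUU : U * star U = 1 := Matrix.mem_unitaryGroup_iff.mp hA.eigenvectorUnitary.2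
  have h1 : x • (1 : Matrix N N ℂ) - A
      = U * (x • (1 : Matrix N N ℂ) - diagonal (RCLike.ofReal ∘ hA.eigenvalues)) * star U := by
    rw [Matrix.mul_sub, Matrix.sub_mul]
    congr 1
    · rw [Matrix.mul_smul, Matrix.mul_one, Matrix.smul_mul, hUU]
    · exact hA.spectral_theorem
  rw [h1, Matrix.det_mul, Matrix.det_mul, mul_comm (det U), mul_assoc, ← Matrix.det_mul, hUU,
    Matrix.det_one, mul_one]
  have h2 : x • (1 : Matrix N N ℂ) - diagonal (RCLike.ofReal ∘ hA.eigenvalues)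
      = diagonal (fun i => x - (hA.eigenvalues i : ℂ)) := by
    rw [smul_eq_diagonal_mul]
    simp [Matrix.diagonal_sub, Function.comp]
  rw [h2, Matrix.det_diagonal]
open Polynomial in
theorem multiset_eig {k : ℕ} (f : Fin k → ℝ) (L : List ℝ)
    (h : ∀ x : ℂ, x ≠ 1 → ∏ i, (x - (f i : ℂ)) = (L.map (fun a : ℝ => x - (a : ℂ))).prod) :
    Multiset.map f Finset.univ.val = ↑L := by
  have hpq : ((Finset.univ.val.map (fun i => ((f i : ℂ)))).map (fun a => X - C a)).prod
      = (((↑L : Multiset ℝ).map (fun r : ℝ => (r : ℂ))).map (fun a => X - C a)).prod := by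
    apply Polynomial.eq_of_infinite_eval_eq
    apply Set.Infinite.mono (s := {x : ℂ | x ≠ 1})
    · intro x hx
      simp only [Set.mem_setOf_eq] at hx ⊢
      rw [Polynomial.eval_multiset_prod, Polynomial.eval_multiset_prod,
        Multiset.map_map, Multiset.map_map, Multiset.map_map]
      have hl : Finset.univ.val.map (((eval x) ∘ (fun a => X - C a)) ∘ fun i => ((f i : ℂ)))
          = Finset.univ.val.map (fun i => x - (f i : ℂ)) := by
        apply Multiset.map_congr rfl; intro i _; simp
      rw [hl, ← Finset.prod_eq_multiset_prod, h x hx]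
      rw [Multiset.map_coe, Multiset.map_coe, Multiset.prod_coe, List.map_map]
      congr 1
      apply List.map_congr_left
      intro a _
      simp
    · exact Set.infinite_of_finite_compl (by simp)
  have := congrArg Polynomial.roots hpq
  rw [Polynomial.roots_multiset_prod_X_sub_C, Polynomial.roots_multiset_prod_X_sub_C] at this
  rw [show (Multiset.map (fun i => ((f i : ℂ))) Finset.univ.val)
      = Multiset.map (fun r : ℝ => (r : ℂ)) (Multiset.map f Finset.univ.val) by
    rw [Multiset.map_map]; rfl] at this
  exact Multiset.map_injective (Complex.ofReal_injective) this

theorem sorted_ofFn_eq {k : ℕ} (f : Fin k → ℝ) (L : List ℝ) (hL : L.Pairwise (· ≤ ·))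
    (h : Multiset.map f Finset.univ.val = ↑L) :
    List.ofFn (f ∘ Tuple.sort f) = L := by
  apply List.Perm.eq_of_pairwise' ((List.sortedLE_ofFn_iff).mpr (Tuple.monotone_sort f)).pairwise hL ?_
  rw [← Multiset.coe_eq_coe]
  have h1 : (↑(List.ofFn (f ∘ Tuple.sort f)) : Multiset ℝ)
      = Multiset.map (f ∘ Tuple.sort f) Finset.univ.val := by
    rw [List.ofFn_eq_map, ← Multiset.map_coe]
    congr 1
  rw [h1, ← h, ← Multiset.map_map]
  congr 1
  have := congrArg Finset.val (Finset.map_univ_equiv (Tuple.sort f))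
  simpa using this

open Matrix in
theorem spec (n : ℕ) (hn : 1 ≤ n)
    (e₀ u : Fin (2 ^ n) → ℂ)
    (he₀ : e₀ = fun j => if j = 0 then 1 else 0)
    (hu : u = fun _ => ((Real.sqrt (2 ^ n))⁻¹ : ℂ))
    (H : ℝ → Matrix (Fin (2 ^ n)) (Fin (2 ^ n)) ℂ)
    (hHdef : ∀ s : ℝ, H s = 1 - ((1 - s : ℝ) : ℂ) • Matrix.vecMulVec u (star u)
      - ((s : ℝ) : ℂ) • Matrix.vecMulVec e₀ (star e₀))
    (hH : ∀ s : ℝ, (H s).IsHermitian)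
    (s : ℝ) (hs : s ∈ Set.Icc (0:ℝ) 1)
    (i j : Fin (Fintype.card (Fin (2 ^ n)))) (hi : (i : ℕ) = 0) (hj : (j : ℕ) = 1) :
    sortedEigs (hH s) j - sortedEigs (hH s) i
      = Real.sqrt (1 - 4*s*(1-s)*(1 - ((Real.sqrt (2^n))⁻¹)^2)) := by
  obtain ⟨hs0, hs1⟩ := hs
  set c : ℝ := (Real.sqrt (2^n))⁻¹ with hc
  have h2n : (0:ℝ) < 2^n := by positivity
  have hsq : Real.sqrt (2^n) > 0 := Real.sqrt_pos.mpr h2n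
  have hc0 : 0 < c := by positivity
  have hc2 : c^2 = ((2:ℝ)^n)⁻¹ := by
    rw [hc, ← Real.sqrt_inv]
    exact Real.sq_sqrt (by positivity)
  have hc2N : c^2 * (2:ℝ)^n = 1 := by rw [hc2]; field_simp
  have hc2le : c^2 ≤ 1 := by
    rw [hc2]
    rw [inv_le_one_iff₀]
    right; exact one_le_pow₀ (by norm_num)
  have h4s0 : 0 ≤ 4*s*(1-s) := by nlinarith
  have h4s1 : 4*s*(1-s) ≤ 1 := by nlinarith [sq_nonneg (2*s-1)]
  have hfac0 : 0 ≤ 4*s*(1-s)*(1-c^2) := by nlinarith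
  have hfac1 : 4*s*(1-s)*(1-c^2) ≤ 1 - c^2 := by nlinarith
  set d : ℝ := 1 - 4*s*(1-s)*(1-c^2) with hd
  have hd0 : 0 ≤ d := by nlinarith
  have hdc2 : c^2 ≤ d := by nlinarith
  set D : ℝ := Real.sqrt d with hD
  have hD2 : D^2 = d := Real.sq_sqrt hd0
  have hD0 : 0 ≤ D := Real.sqrt_nonneg _
  have hDc : c ≤ D := by
    rw [hD, show c = Real.sqrt (c^2) from (Real.sqrt_sq hc0.le).symm]
    exact Real.sqrt_le_sqrt hdc2
  have hD1 : D ≤ 1 := by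
    rw [hD]
    exact Real.sqrt_le_one.mpr (by nlinarith)
  set lm : ℝ := (1 - D)/2 with hlm
  set lp : ℝ := (1 + D)/2 with hlp
  have hsum : lm + lp = 1 := by rw [hlm, hlp]; ring
  have hprod : lm * lp = s*(1-s)*(1-c^2) := by
    rw [hlm, hlp]
    have : (1 - D)/2 * ((1 + D)/2) = (1 - D^2)/4 := by ring
    rw [this, hD2, hd]; ring
  have hN2 : 2 ≤ 2^n := by
    have := Nat.one_lt_two_pow_iff.mpr (by omega : n ≠ 0); omega
  set L : List ℝ := lm :: lp :: List.replicate (2^n - 2) 1 with hL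
  -- multiset of eigenvalues₀
  have hmult : Multiset.map (hH s).eigenvalues₀ Finset.univ.val = ↑L := by
    apply multiset_eig
    intro x hx
    have hdet := det_sub_eq_prod (hH s) x
    -- rewrite the matrix
    have hmat : x • (1 : Matrix (Fin (2^n)) (Fin (2^n)) ℂ) - H s
        = (x - 1) • (1 : Matrix (Fin (2^n)) (Fin (2^n)) ℂ)
          + Matrix.of (fun j k => ((1-s:ℝ):ℂ) * (c:ℂ)^2 + ((s:ℝ):ℂ) * e₀ j * e₀ k) := by
      rw [hHdef s]
      have hcC : (c:ℂ) = ((Real.sqrt (2^n) : ℝ) : ℂ)⁻¹ := by rw [hc]; push_cast; ring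
      ext a b
      simp only [Matrix.sub_apply, Matrix.add_apply, Matrix.smul_apply, Matrix.one_apply,
        Matrix.of_apply, Matrix.vecMulVec_apply, hu, he₀, Pi.star_apply, smul_eq_mul,
        RCLike.star_def, apply_ite (starRingEnd ℂ), _root_.map_one, _root_.map_zero,
        map_inv₀, Complex.conj_ofReal, hcC]
      split_ifs <;> push_cast <;> ring
    have hα : x - 1 ≠ 0 := sub_ne_zero.mpr hx
    have hdet2 := detlem (2^n) hN2 (x-1) (((1-s:ℝ):ℂ) * (c:ℂ)^2) ((s:ℝ):ℂ) hα 0 e₀ he₀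
    rw [hmat, hdet2] at hdet
    -- identify products
    have hprodeq : ∏ i : Fin (2^n), (x - ((hH s).eigenvalues i : ℂ))
        = ∏ i0 : Fin (Fintype.card (Fin (2^n))), (x - ((hH s).eigenvalues₀ i0 : ℂ)) := by
      exact Equiv.prod_comp (Fintype.equivOfCardEq (Fintype.card_fin _)).symm
        (fun i0 => x - ((hH s).eigenvalues₀ i0 : ℂ))
    rw [hprodeq] at hdet
    rw [← hdet, hL]
    simp only [List.map_cons, List.map_replicate, List.prod_cons, List.prod_replicate]
    -- arithmetic identity
    have hsumC : (lm:ℂ) + (lp:ℂ) = 1 := by exact_mod_cast congrArg Complex.ofReal hsum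
    have hprodC : (lm:ℂ) * (lp:ℂ) = (s:ℂ)*(1-(s:ℂ))*(1-(c:ℂ)^2) := by
      have := congrArg Complex.ofReal hprod; push_cast at this; exact this
    have hc2NC : (c:ℂ)^2 * ((2^n : ℕ):ℂ) = 1 := by
      have := congrArg Complex.ofReal hc2N
      push_cast at this
      exact_mod_cast this
    have hquad : (x-1)^2 + (x-1) * (((2^n : ℕ):ℂ) * (((1-s:ℝ):ℂ) * (c:ℂ)^2) + ((s:ℝ):ℂ))
        + (((1-s:ℝ):ℂ) * (c:ℂ)^2) * ((s:ℝ):ℂ) * (((2^n : ℕ):ℂ) - 1)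
        = (x - (lm:ℂ)) * (x - (lp:ℂ)) := by
      have hc2NC' := hc2NC
      push_cast at hc2NC' ⊢
      linear_combination ((x-1)*(1-(s:ℂ)) + (s:ℂ)*(1-(s:ℂ))) * hc2NC' + x * hsumC - hprodC
    rw [hquad]
    push_cast
    ring
  -- sorted list
  have hsorted : L.Pairwise (· ≤ ·) := by
    rw [hL]
    refine List.pairwise_cons.mpr ⟨?_, List.pairwise_cons.mpr ⟨?_, ?_⟩⟩
    · intro b hb
      rcases List.mem_cons.mp hb with h | h
      · rw [h, hlm, hlp]; linarith
      · rw [List.eq_of_mem_replicate h, hlm]; linarith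
    · intro b hb
      rw [List.eq_of_mem_replicate hb, hlp]; linarith
    · exact List.pairwise_replicate.mpr (Or.inr le_rfl)
  have hlist : List.ofFn (sortedEigs (hH s)) = L := by
    unfold sortedEigs
    exact sorted_ofFn_eq _ _ hsorted hmult
  -- extract entries
  have hcard : Fintype.card (Fin (2^n)) = 2^n := Fintype.card_fin _
  have hkey : ∀ (k : Fin (Fintype.card (Fin (2^n)))) (a : ℝ), L[(k:ℕ)]? = some a →
      sortedEigs (hH s) k = a := by
    intro k a ha
    have h1 : (List.ofFn (sortedEigs (hH s)))[(k:ℕ)]? = some (sortedEigs (hH s) k) := by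
      have hk2 : (k:ℕ) < 2^n := by simpa using k.isLt
      simp [List.getElem?_ofFn, List.ofFnNthVal, hk2]
    rw [hlist, ha] at h1
    exact (Option.some_injective _ h1).symm
  have hg0 : sortedEigs (hH s) i = lm := by
    apply hkey
    rw [hi, hL]
    simp
  have hg1 : sortedEigs (hH s) j = lp := by
    apply hkey
    rw [hj, hL]
    simp
  rw [hg0, hg1, hlm, hlp]
  rw [show (1+D)/2 - (1-D)/2 = D from by ring]

/-- for `n` qubits, with `e₀ = |0…0⟩` and `u = F e₀` the uniform
superposition (`u j = 2^{-n/2}` for all `j`), the evolution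
`H^A_s = I − (1−s)|u⟩⟨u| − s|e₀⟩⟨e₀|` has minimal spectral gap `2^{-n/2}` over
`s ∈ [0,1]`, attained at `s = 1/2`. -/
theorem stmt_1 (n : ℕ) (hn : 1 ≤ n)
    (e₀ u : Fin (2 ^ n) → ℂ)
    (he₀ : e₀ = fun j => if j = 0 then 1 else 0)
    (hu : u = fun _ => ((Real.sqrt (2 ^ n))⁻¹ : ℂ))
    (H : ℝ → Matrix (Fin (2 ^ n)) (Fin (2 ^ n)) ℂ)
    (hHdef : ∀ s : ℝ, H s = 1 - ((1 - s : ℝ) : ℂ) • Matrix.vecMulVec u (star u)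
      - ((s : ℝ) : ℂ) • Matrix.vecMulVec e₀ (star e₀))
    (hH : ∀ s : ℝ, (H s).IsHermitian) :
    sortedEigs (hH (1 / 2)) ⟨1, by simpa using Nat.one_lt_two_pow_iff.mpr (by omega)⟩ -
        sortedEigs (hH (1 / 2)) ⟨0, by simp⟩ = (Real.sqrt (2 ^ n))⁻¹ ∧
    ∀ s ∈ Set.Icc (0 : ℝ) 1,
      (Real.sqrt (2 ^ n))⁻¹ ≤
        sortedEigs (hH s) ⟨1, by simpa using Nat.one_lt_two_pow_iff.mpr (by omega)⟩ -
          sortedEigs (hH s) ⟨0, by simp⟩ := by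
  have h2n : (0:ℝ) < 2^n := by positivity
  have hc0 : 0 < (Real.sqrt (2^n))⁻¹ := by positivity
  have hc2 : ((Real.sqrt (2^n))⁻¹)^2 = ((2:ℝ)^n)⁻¹ := by
    rw [← Real.sqrt_inv]
    exact Real.sq_sqrt (by positivity)
  have hc2le : ((Real.sqrt (2^n))⁻¹)^2 ≤ 1 := by
    rw [hc2, inv_le_one_iff₀]
    right; exact one_le_pow₀ (by norm_num)
  constructor
  · rw [spec n hn e₀ u he₀ hu H hHdef hH (1/2) (by constructor <;> norm_num) _ _ rfl rfl]
    rw [show 1 - 4*(1/2:ℝ)*(1-1/2)*(1 - ((Real.sqrt (2^n))⁻¹)^2)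
        = ((Real.sqrt (2^n))⁻¹)^2 from by ring]
    exact Real.sqrt_sq hc0.le
  · intro s hs
    rw [spec n hn e₀ u he₀ hu H hHdef hH s hs _ _ rfl rfl]
    obtain ⟨hs0, hs1⟩ := hs
    have h4s0 : 0 ≤ 4*s*(1-s) := by nlinarith
    have h4s1 : 4*s*(1-s) ≤ 1 := by nlinarith [sq_nonneg (2*s-1)]
    calc (Real.sqrt (2^n))⁻¹ = Real.sqrt (((Real.sqrt (2^n))⁻¹)^2) :=
          (Real.sqrt_sq hc0.le).symm
      _ ≤ Real.sqrt (1 - 4*s*(1-s)*(1 - ((Real.sqrt (2^n))⁻¹)^2)) := by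
          apply Real.sqrt_le_sqrt
          nlinarith
end

section
/- Let H₀, H₁ be Hermitian matrices on ℂ^d, let V be a subspace of ℂ^d invariant under H₀, and suppose the escape rate of V under H₁ is at most β, i.e., ‖Π_{V⊥} H₁ v‖ ≤ β for every unit vector v ∈ V. Let τ > 0 with βτ ≤ π/2, and let ψ : [0,τ] → ℂ^d be differentiable with ψ'(t) = −i[(1 − t/τ)H₀ + (t/τ)H₁]ψ(t) and ψ(0) a unit vector in V. Then ‖Π_V ψ(τ)‖ ≥ cos(βτ), and hence ‖Π_{V⊥} ψ(τ)‖ ≤ sin(βτ). -/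
open Set Filter Topology

local notation "⟪" x ", " y "⟫" => @inner ℂ _ _ x y

/-- Derivative of the squared norm of a differentiable curve in a complex inner product space. -/
private lemma stmt6_normsq_deriv {E : Type*} [NormedAddCommGroup E] [InnerProductSpace ℂ E]
    {f : ℝ → E} {f' : E} {t : ℝ} (hf : HasDerivAt f f' t) :
    HasDerivAt (fun s => ‖f s‖ ^ 2) ((⟪f t, f'⟫ + ⟪f', f t⟫).re) t := by
  have h1 := hf.inner ℂ hf
  have h2 := Complex.reCLM.hasFDerivAt.comp_hasDerivAt t h1
  have hfun : (fun s => ‖f s‖ ^ 2) = fun s => (⟪f s, f s⟫).re := by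
    funext s
    rw [← RCLike.re_to_complex, inner_self_eq_norm_sq]
  rw [hfun]
  simpa [Function.comp_def] using h2

/-- Comparison lemma : if `u(0) = 0`, `0 ≤ u ≤ 1` and `u' ≤ 2β√(u(1-u))` on `[0,τ]`, then
`u(τ) ≤ sin²(βτ)` provided `βτ ≤ π/2`. -/
private lemma stmt6_comp {τ β : ℝ} (hτ : 0 < τ) (hβ : 0 ≤ β) {u D : ℝ → ℝ}
    (hu : ∀ t ∈ Set.Icc (0:ℝ) τ, HasDerivAt u (D t) t)
    (hu0 : u 0 = 0)
    (hu1 : ∀ t ∈ Set.Icc (0:ℝ) τ, u t ≤ 1)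
    (hD : ∀ t ∈ Set.Icc (0:ℝ) τ, D t ≤ 2 * β * (Real.sqrt (u t) * Real.sqrt (1 - u t)))
    (hβτ : β * τ ≤ Real.pi / 2) :
    u τ ≤ Real.sin (β * τ) ^ 2 := by
  have main : ∀ ε : ℝ, 0 < ε → (β + ε) * τ + ε ≤ Real.pi / 2 →
      u τ ≤ Real.sin ((β + ε) * τ + ε) ^ 2 := by
    intro ε hε hle
    set γ := β + ε with hγ
    have hγpos : 0 < γ := by positivity
    have hB : ∀ x : ℝ, HasDerivAt (fun x => Real.sin (γ * x + ε) ^ 2)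
        (2 * Real.sin (γ * x + ε) * (Real.cos (γ * x + ε) * γ)) x := by
      intro x
      have h1 : HasDerivAt (fun x : ℝ => γ * x + ε) γ x := by
        simpa using ((hasDerivAt_id x).const_mul γ).add_const ε
      have h2 : HasDerivAt (fun x => Real.sin (γ * x + ε)) (Real.cos (γ * x + ε) * γ) x :=
        h1.sin
      simpa using h2.fun_pow 2
    have key : ∀ x ∈ Set.Icc (0:ℝ) τ, u x ≤ Real.sin (γ * x + ε) ^ 2 := by
      apply image_le_of_deriv_right_lt_deriv_boundary (f' := D)
        (fun x hx => (hu x hx).continuousAt.continuousWithinAt)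
        (fun x hx => (hu x (Set.Ico_subset_Icc_self hx)).hasDerivWithinAt)
        (by rw [hu0]; positivity) hB
      intro x hx hEq
      have hx' : x ∈ Set.Icc (0:ℝ) τ := Set.Ico_subset_Icc_self hx
      set θ := γ * x + ε with hθ
      have hθ0 : 0 < θ := by nlinarith [mul_nonneg hγpos.le hx.1]
      have hθπ : θ < Real.pi / 2 := by nlinarith [mul_pos hγpos (sub_pos.mpr hx.2)]
      have hs : 0 < Real.sin θ :=
        Real.sin_pos_of_pos_of_lt_pi hθ0 (by nlinarith [Real.pi_pos])
      have hc : 0 < Real.cos θ :=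
        Real.cos_pos_of_mem_Ioo ⟨by nlinarith [Real.pi_pos], hθπ⟩
      have h1 : Real.sqrt (u x) = Real.sin θ := by
        rw [hEq]; exact Real.sqrt_sq hs.le
      have h2 : Real.sqrt (1 - u x) = Real.cos θ := by
        rw [hEq]
        have e : 1 - Real.sin θ ^ 2 = Real.cos θ ^ 2 := by
          nlinarith [Real.sin_sq_add_cos_sq θ]
        rw [e]; exact Real.sqrt_sq hc.le
      have hb := hD x hx'
      rw [h1, h2] at hb
      calc D x ≤ 2 * β * (Real.sin θ * Real.cos θ) := hb
        _ < 2 * Real.sin θ * (Real.cos θ * γ) := by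
            nlinarith [mul_pos hs hc, mul_pos (mul_pos hs hc) hε]
    simpa using key τ (Set.right_mem_Icc.mpr hτ.le)
  rcases eq_or_lt_of_le hβτ with heq | hlt
  · have h1 : Real.sin (β * τ) = 1 := by rw [heq, Real.sin_pi_div_two]
    rw [h1]
    simpa using hu1 τ (Set.right_mem_Icc.mpr hτ.le)
  · have hcont : Tendsto (fun ε : ℝ => Real.sin ((β + ε) * τ + ε) ^ 2) (𝓝[>] 0)
        (𝓝 (Real.sin (β * τ) ^ 2)) := by
      have hcts : Continuous fun ε : ℝ => Real.sin ((β + ε) * τ + ε) ^ 2 :=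
        (Real.continuous_sin.comp
          (((continuous_const.add continuous_id).mul continuous_const).add
            continuous_id)).pow 2
      have h0 := hcts.tendsto 0
      simpa using h0.mono_left nhdsWithin_le_nhds
    refine ge_of_tendsto hcont ?_
    have hδ : 0 < (Real.pi / 2 - β * τ) / (τ + 1) := by
      apply div_pos (by linarith) (by linarith)
    filter_upwards [Ioo_mem_nhdsGT_of_mem (Set.left_mem_Ico.mpr hδ)] with ε hε
    refine main ε hε.1 ?_
    have h2 : ε * (τ + 1) < ((Real.pi / 2 - β * τ) / (τ + 1)) * (τ + 1) := by
      apply mul_lt_mul_of_pos_right hε.2 (by linarith)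
    rw [div_mul_cancel₀ _ (by linarith : τ + 1 ≠ 0)] at h2
    nlinarith

/-- if `V` is invariant under `H₀` and the escape rate of `V` under `H₁` is at
most `β`, then the solution of `ψ' = −i[(1−t/τ)H₀ + (t/τ)H₁]ψ` started at a unit vector in
`V` satisfies `‖Π_V ψ(τ)‖ ≥ cos(βτ)` and `‖Π_{V⊥} ψ(τ)‖ ≤ sin(βτ)` whenever `βτ ≤ π/2`. -/
theorem stmt_6 (d : ℕ) (H₀ H₁ : Matrix (Fin d) (Fin d) ℂ)
    (hH₀ : H₀.IsHermitian) (hH₁ : H₁.IsHermitian)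
    (V : Submodule ℂ (EuclideanSpace ℂ (Fin d)))
    (hinv : ∀ v ∈ V, Matrix.toEuclideanCLM (𝕜 := ℂ) H₀ v ∈ V)
    (β : ℝ)
    (hesc : ∀ v ∈ V, ‖v‖ = 1 →
      ‖(Submodule.orthogonalProjectionOnto Vᗮ (Matrix.toEuclideanCLM (𝕜 := ℂ) H₁ v) :
        EuclideanSpace ℂ (Fin d))‖ ≤ β)
    (τ : ℝ) (hτ : 0 < τ) (hβτ : β * τ ≤ Real.pi / 2)
    (ψ : ℝ → EuclideanSpace ℂ (Fin d))
    (hψ : ∀ t ∈ Set.Icc (0 : ℝ) τ,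
      HasDerivAt ψ ((-Complex.I) • Matrix.toEuclideanCLM (𝕜 := ℂ)
        (((1 - t / τ : ℝ) : ℂ) • H₀ + ((t / τ : ℝ) : ℂ) • H₁) (ψ t)) t)
    (hψ0V : ψ 0 ∈ V) (hψ0 : ‖ψ 0‖ = 1) :
    Real.cos (β * τ) ≤ ‖(Submodule.orthogonalProjectionOnto V (ψ τ) : EuclideanSpace ℂ (Fin d))‖ ∧
    ‖(Submodule.orthogonalProjectionOnto Vᗮ (ψ τ) : EuclideanSpace ℂ (Fin d))‖ ≤ Real.sin (β * τ) := by
  have hβ : 0 ≤ β := le_trans (norm_nonneg _) (hesc (ψ 0) hψ0V hψ0)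
  set T : ℝ → (EuclideanSpace ℂ (Fin d) →L[ℂ] EuclideanSpace ℂ (Fin d)) :=
    fun t => Matrix.toEuclideanCLM (𝕜 := ℂ)
      (((1 - t / τ : ℝ) : ℂ) • H₀ + ((t / τ : ℝ) : ℂ) • H₁) with hT
  have hψ' : ∀ t ∈ Set.Icc (0 : ℝ) τ, HasDerivAt ψ ((-Complex.I) • T t (ψ t)) t := hψ
  set Q : EuclideanSpace ℂ (Fin d) →L[ℂ] EuclideanSpace ℂ (Fin d) :=
    (Vᗮ).subtypeL.comp (Submodule.orthogonalProjectionOnto Vᗮ) with hQdef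
  have hQcoe : ∀ x : EuclideanSpace ℂ (Fin d),
      Q x = (Submodule.orthogonalProjectionOnto Vᗮ x : EuclideanSpace ℂ (Fin d)) := fun x => rfl
  -- symmetry of the Hamiltonian
  have hsym : ∀ t : ℝ, LinearMap.IsSymmetric
      ((T t : EuclideanSpace ℂ (Fin d) →L[ℂ] EuclideanSpace ℂ (Fin d)) :
        EuclideanSpace ℂ (Fin d) →ₗ[ℂ] EuclideanSpace ℂ (Fin d)) := by
    intro t
    rw [hT]
    simp only
    rw [Matrix.coe_toEuclideanCLM_eq_toEuclideanLin]
    apply Matrix.isHermitian_iff_isSymmetric.mp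
    have hsm : ∀ (r : ℝ) (A : Matrix (Fin d) (Fin d) ℂ), A.IsHermitian →
        (((r : ℝ) : ℂ) • A).IsHermitian := by
      intro r A hA
      have h : (((r : ℝ) : ℂ) • A).conjTranspose = ((r : ℝ) : ℂ) • A := by
        rw [Matrix.conjTranspose_smul, hA.eq]
        congr 1
        simp [Complex.star_def, Complex.conj_ofReal]
      exact h
    exact Matrix.IsHermitian.add (hsm _ _ hH₀) (hsm _ _ hH₁)
  have him : ∀ (t : ℝ) (x : EuclideanSpace ℂ (Fin d)), (⟪x, T t x⟫).im = 0 := by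
    intro t x
    have h := (hsym t).apply_clm x x
    have h2 : (starRingEnd ℂ) ⟪x, T t x⟫ = ⟪x, T t x⟫ := by
      rw [inner_conj_symm]; exact h
    exact Complex.conj_eq_iff_im.mp h2
  have hrule : ∀ z : ℂ, ((-Complex.I) * z).re = z.im := by
    intro z; simp [Complex.mul_re]
  -- norm conservation
  have hNzero : ∀ t ∈ Set.Icc (0:ℝ) τ, HasDerivAt (fun s => ‖ψ s‖ ^ 2) 0 t := by
    intro t ht
    have h := stmt6_normsq_deriv (hψ' t ht)
    have hv : (⟪ψ t, (-Complex.I) • T t (ψ t)⟫ + ⟪(-Complex.I) • T t (ψ t), ψ t⟫).re = 0 := by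
      have e1 : ⟪(-Complex.I) • T t (ψ t), ψ t⟫ =
          (starRingEnd ℂ) ⟪ψ t, (-Complex.I) • T t (ψ t)⟫ := (inner_conj_symm _ _).symm
      have e2 : ⟪ψ t, (-Complex.I) • T t (ψ t)⟫ = (-Complex.I) * ⟪ψ t, T t (ψ t)⟫ :=
        inner_smul_right _ _ _
      rw [Complex.add_re, e1, Complex.conj_re, e2, hrule]
      rw [him t (ψ t)]; ring
    rwa [hv] at h
  have hNall : ∀ t ∈ Set.Icc (0:ℝ) τ, ‖ψ t‖ ^ 2 = 1 := by
    intro t ht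
    have h := constant_of_has_deriv_right_zero (f := fun s => ‖ψ s‖ ^ 2)
      (fun x hx => (hNzero x hx).continuousAt.continuousWithinAt)
      (fun x hx => (hNzero x (Set.Ico_subset_Icc_self hx)).hasDerivWithinAt) t ht
    have h' : ‖ψ t‖ ^ 2 = ‖ψ 0‖ ^ 2 := h
    rw [h', hψ0]; norm_num
  -- orthogonal decomposition facts
  have hsplitV : ∀ x : EuclideanSpace ℂ (Fin d),
      (Submodule.orthogonalProjectionOnto V x : EuclideanSpace ℂ (Fin d)) + Q x = x := by
    intro x
    rw [hQcoe]
    exact Submodule.starProjection_add_starProjection_orthogonal (K := V) x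
  have hQ0 : ∀ v ∈ V, Q v = 0 := by
    intro v hv
    rw [hQcoe, Submodule.orthogonalProjectionOnto_apply_of_mem_orthogonal
      (V.le_orthogonal_orthogonal hv), Submodule.coe_zero]
  have hQmem : ∀ x : EuclideanSpace ℂ (Fin d), Q x ∈ Vᗮ := by
    intro x; rw [hQcoe]; exact SetLike.coe_mem _
  have hQinner : ∀ x y : EuclideanSpace ℂ (Fin d), x ∈ Vᗮ → ⟪x, Q y⟫ = ⟪x, y⟫ := by
    intro x y hx
    conv_rhs => rw [← hsplitV y]
    rw [inner_add_right,
      Submodule.inner_left_of_mem_orthogonal (SetLike.coe_mem _) hx, zero_add]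
  have hpyth : ∀ x : EuclideanSpace ℂ (Fin d),
      ‖(Submodule.orthogonalProjectionOnto V x : EuclideanSpace ℂ (Fin d))‖ ^ 2 + ‖Q x‖ ^ 2 = ‖x‖ ^ 2 := by
    intro x
    have h := Submodule.norm_sq_eq_add_norm_sq_projection x V
    rw [hQcoe]
    simpa using h.symm
  -- scaled escape bound
  have hesc' : ∀ v ∈ V, ‖Q (Matrix.toEuclideanCLM (𝕜 := ℂ) H₁ v)‖ ≤ β * ‖v‖ := by
    intro v hv
    rcases eq_or_ne v 0 with rfl | hv0
    · simp
    · have hn : (0:ℝ) < ‖v‖ := norm_pos_iff.mpr hv0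
      set w : EuclideanSpace ℂ (Fin d) := ((‖v‖⁻¹ : ℝ) : ℂ) • v with hw
      have hwV : w ∈ V := V.smul_mem _ hv
      have hwn : ‖w‖ = 1 := by
        rw [hw, norm_smul]
        simp [abs_of_nonneg (inv_nonneg.mpr hn.le), inv_mul_cancel₀ hn.ne']
      have h := hesc w hwV hwn
      rw [← hQcoe] at h
      have hQw : ‖Q (Matrix.toEuclideanCLM (𝕜 := ℂ) H₁ w)‖
          = ‖v‖⁻¹ * ‖Q (Matrix.toEuclideanCLM (𝕜 := ℂ) H₁ v)‖ := by
        rw [hw, map_smul, map_smul, norm_smul]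
        simp [abs_of_nonneg (inv_nonneg.mpr hn.le)]
      rw [hQw] at h
      have h3 := mul_le_mul_of_nonneg_left h hn.le
      rw [← mul_assoc, mul_inv_cancel₀ hn.ne', one_mul] at h3
      linarith
  -- the function u and its derivative
  set u : ℝ → ℝ := fun t => ‖Q (ψ t)‖ ^ 2 with hu
  set D : ℝ → ℝ := fun t =>
    (⟪Q (ψ t), Q ((-Complex.I) • T t (ψ t))⟫ + ⟪Q ((-Complex.I) • T t (ψ t)), Q (ψ t)⟫).re
    with hD
  have hud : ∀ t ∈ Set.Icc (0:ℝ) τ, HasDerivAt u (D t) t := by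
    intro t ht
    have hQψ : HasDerivAt (fun s => Q (ψ s)) (Q ((-Complex.I) • T t (ψ t))) t := by
      simpa [Function.comp_def] using
        ((Q.restrictScalars ℝ).hasFDerivAt (x := ψ t)).comp_hasDerivAt t (hψ' t ht)
    exact stmt6_normsq_deriv hQψ
  have hu0 : u 0 = 0 := by
    rw [hu]; simp only
    rw [hQ0 _ hψ0V]; simp
  have hu1 : ∀ t ∈ Set.Icc (0:ℝ) τ, u t ≤ 1 := by
    intro t ht
    have h := hpyth (ψ t)
    rw [hNall t ht] at h
    have := sq_nonneg ‖(Submodule.orthogonalProjectionOnto V (ψ t) : EuclideanSpace ℂ (Fin d))‖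
    simp only [hu]
    linarith
  -- the derivative bound
  have hDb : ∀ t ∈ Set.Icc (0:ℝ) τ,
      D t ≤ 2 * β * (Real.sqrt (u t) * Real.sqrt (1 - u t)) := by
    intro t ht
    set q : EuclideanSpace ℂ (Fin d) := Q (ψ t) with hq
    set p : EuclideanSpace ℂ (Fin d) := (Submodule.orthogonalProjectionOnto V (ψ t) :
      EuclideanSpace ℂ (Fin d)) with hp
    have hpV : p ∈ V := SetLike.coe_mem _
    have hqpsum : p + q = ψ t := hsplitV (ψ t)
    have hDre : D t = 2 * (⟪q, Q ((-Complex.I) • T t (ψ t))⟫).re := by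
      rw [hD]; simp only
      rw [← inner_conj_symm (Q (ψ t)) (Q ((-Complex.I) • T t (ψ t)))]
      rw [Complex.add_re, Complex.conj_re]
      ring
    -- the inner product bound
    have hz : (⟪q, Q ((-Complex.I) • T t (ψ t))⟫).re ≤ β * (‖q‖ * ‖p‖) := by
      have e1 : Q ((-Complex.I) • T t (ψ t)) = (-Complex.I) • Q (T t (ψ t)) := map_smul Q _ _
      have e2 : T t (ψ t) = T t p + T t q := by rw [← map_add, hqpsum]
      have e3 : ⟪q, Q (T t q)⟫ = ⟪q, T t q⟫ := hQinner q _ (hQmem (ψ t))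
      rw [e1, e2, map_add, inner_smul_right, inner_add_right, e3]
      rw [hrule, Complex.add_im, him t q, add_zero]
      -- now bound the imaginary part of ⟪q, Q (T t p)⟫
      have hb1 : (⟪q, Q (T t p)⟫).im ≤ ‖q‖ * ‖Q (T t p)‖ := by
        calc (⟪q, Q (T t p)⟫).im ≤ ‖⟪q, Q (T t p)⟫‖ := Complex.im_le_norm _
          _ ≤ ‖q‖ * ‖Q (T t p)‖ := by
              exact norm_inner_le_norm _ _
      -- bound ‖Q (T t p)‖
      have hTp : Q (T t p) = ((t / τ : ℝ) : ℂ) • Q (Matrix.toEuclideanCLM (𝕜 := ℂ) H₁ p) := by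
        have e : T t p = ((1 - t / τ : ℝ) : ℂ) • Matrix.toEuclideanCLM (𝕜 := ℂ) H₀ p
            + ((t / τ : ℝ) : ℂ) • Matrix.toEuclideanCLM (𝕜 := ℂ) H₁ p := by
          rw [hT]; simp [map_add, map_smul]
        rw [e, map_add, map_smul, map_smul, hQ0 _ (hinv p hpV), smul_zero, zero_add]
      have hs1 : 0 ≤ t / τ := div_nonneg ht.1 hτ.le
      have hs2 : t / τ ≤ 1 := (div_le_one hτ).mpr ht.2
      have hb2 : ‖Q (T t p)‖ ≤ β * ‖p‖ := by
        rw [hTp, norm_smul]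
        have : ‖((t / τ : ℝ) : ℂ)‖ = t / τ := by
          rw [Complex.norm_real, Real.norm_eq_abs, abs_of_nonneg hs1]
        rw [this]
        calc t / τ * ‖Q (Matrix.toEuclideanCLM (𝕜 := ℂ) H₁ p)‖
            ≤ 1 * ‖Q (Matrix.toEuclideanCLM (𝕜 := ℂ) H₁ p)‖ := by
              apply mul_le_mul_of_nonneg_right hs2 (norm_nonneg _)
          _ = ‖Q (Matrix.toEuclideanCLM (𝕜 := ℂ) H₁ p)‖ := one_mul _
          _ ≤ β * ‖p‖ := hesc' p hpV
      calc (⟪q, Q (T t p)⟫).im ≤ ‖q‖ * ‖Q (T t p)‖ := hb1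
        _ ≤ ‖q‖ * (β * ‖p‖) := mul_le_mul_of_nonneg_left hb2 (norm_nonneg _)
        _ = β * (‖q‖ * ‖p‖) := by ring
    -- identify the square roots
    have h1t := hNall t ht
    have hpy := hpyth (ψ t)
    rw [h1t] at hpy
    have hut : u t = ‖q‖ ^ 2 := rfl
    have hqs : Real.sqrt (u t) = ‖q‖ := by
      rw [hut]; exact Real.sqrt_sq (norm_nonneg q)
    have hps : Real.sqrt (1 - u t) = ‖p‖ := by
      have e : 1 - u t = ‖p‖ ^ 2 := by rw [hut]; linarith
      rw [e]; exact Real.sqrt_sq (norm_nonneg p)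
    rw [hDre, hqs, hps]
    linarith
  -- apply the comparison lemma
  have humain : u τ ≤ Real.sin (β * τ) ^ 2 := stmt6_comp hτ hβ hud hu0 hu1 hDb hβτ
  have hτmem : τ ∈ Set.Icc (0:ℝ) τ := Set.right_mem_Icc.mpr hτ.le
  have hsin : 0 ≤ Real.sin (β * τ) :=
    Real.sin_nonneg_of_nonneg_of_le_pi (mul_nonneg hβ hτ.le)
      (le_trans hβτ (by linarith [Real.pi_pos]))
  have hcos : 0 ≤ Real.cos (β * τ) :=
    Real.cos_nonneg_of_mem_Icc ⟨by linarith [Real.pi_pos, mul_nonneg hβ hτ.le], hβτ⟩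
  have hbQ : ‖(Submodule.orthogonalProjectionOnto Vᗮ (ψ τ) : EuclideanSpace ℂ (Fin d))‖ = ‖Q (ψ τ)‖ := by
    rw [hQcoe]
  have huτ : u τ = ‖Q (ψ τ)‖ ^ 2 := rfl
  constructor
  · -- cos bound
    have hpy := hpyth (ψ τ)
    rw [hNall τ hτmem] at hpy
    have hcos2 : Real.cos (β * τ) ^ 2 ≤
        ‖(Submodule.orthogonalProjectionOnto V (ψ τ) : EuclideanSpace ℂ (Fin d))‖ ^ 2 := by
      have hsc := Real.sin_sq_add_cos_sq (β * τ)
      rw [huτ] at humain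
      linarith
    calc Real.cos (β * τ) = Real.sqrt (Real.cos (β * τ) ^ 2) := (Real.sqrt_sq hcos).symm
      _ ≤ Real.sqrt (‖(Submodule.orthogonalProjectionOnto V (ψ τ) : EuclideanSpace ℂ (Fin d))‖ ^ 2) :=
          Real.sqrt_le_sqrt hcos2
      _ = ‖(Submodule.orthogonalProjectionOnto V (ψ τ) : EuclideanSpace ℂ (Fin d))‖ :=
          Real.sqrt_sq (norm_nonneg _)
  · -- sin bound
    rw [hbQ]
    calc ‖Q (ψ τ)‖ = Real.sqrt (‖Q (ψ τ)‖ ^ 2) := (Real.sqrt_sq (norm_nonneg _)).symm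
      _ ≤ Real.sqrt (Real.sin (β * τ) ^ 2) := Real.sqrt_le_sqrt (by rw [← huτ]; exact humain)
      _ = Real.sin (β * τ) := Real.sqrt_sq hsin
end

section
/- (Escape rate bounds success.) Let H₀, H₁ be Hermitian matrices on ℂ^d, let V be a subspace of ℂ^d invariant under H₀, and suppose the escape rate of V under H₁ is at most β. Let τ > 0 with βτ ≤ π/2, and let ψ : [0,τ] → ℂ^d be differentiable with ψ'(t) = −i[(1 − t/τ)H₀ + (t/τ)H₁]ψ(t) and ψ(0) a unit vector in V. Then for any unit vector α₁ with ‖Π_V α₁‖ ≤ ε, the overlap of the final state with α₁ satisfies |⟨α₁, ψ(τ)⟩| ≤ sin(βτ) + ε. -/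
open Set Real

local notation "⟪" x ", " y "⟫" => @inner ℂ _ _ x y

section aux

lemma gronwall_sin_sq (g gd : ℝ → ℝ) (β τ : ℝ) (hβ : 0 ≤ β) (hτ : 0 < τ)
    (hg' : ∀ t ∈ Icc (0:ℝ) τ, HasDerivAt g (gd t) t)
    (hg0 : g 0 = 0)
    (hbound : ∀ t ∈ Icc (0:ℝ) τ,
      gd t ≤ 2 * β * Real.sqrt (g t) * Real.sqrt (1 - g t))
    (θ : ℝ) (h1 : β * τ < θ) (h2 : θ < Real.pi / 2) :
    g τ ≤ Real.sin θ ^ 2 := by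
  set δ : ℝ := (θ - β * τ) / 2 with hδdef
  have hδ : 0 < δ := by simp only [hδdef]; linarith
  set β' : ℝ := β + δ / τ with hβ'def
  have hββ' : β < β' := by
    have : 0 < δ / τ := div_pos hδ hτ
    simp only [hβ'def]; linarith
  have hβ'pos : 0 < β' := lt_of_le_of_lt hβ hββ'
  have hθeq : β' * τ + δ = θ := by
    rw [hβ'def, add_mul, div_mul_cancel₀ _ hτ.ne', hδdef]
    ring
  clear_value δ β'
  set B : ℝ → ℝ := fun t => Real.sin (β' * t + δ) ^ 2 with hBdef
  set B' : ℝ → ℝ := fun t => 2 * Real.sin (β' * t + δ) * (Real.cos (β' * t + δ) * β') with hB'def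
  have hB : ∀ x, HasDerivAt B (B' x) x := by
    intro x
    have h1 : HasDerivAt (fun x : ℝ => β' * x + δ) β' x := by
      simpa using ((hasDerivAt_id x).const_mul β').add_const δ
    have h2 : HasDerivAt (fun x : ℝ => Real.sin (β' * x + δ))
        (Real.cos (β' * x + δ) * β') x :=
      h1.sin
    have h3 := h2.fun_pow 2
    convert h3 using 1
    show 2 * Real.sin (β' * x + δ) * (Real.cos (β' * x + δ) * β') = _
    push_cast; ring
    all_goals rfl
  have key : ∀ ⦃x⦄, x ∈ Icc (0:ℝ) τ → g x ≤ B x := by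
    refine image_le_of_deriv_right_lt_deriv_boundary
      (fun t ht => (hg' t ht).continuousAt.continuousWithinAt)
      (fun t ht => (hg' t (Ico_subset_Icc_self ht)).hasDerivWithinAt)
      ?_ hB ?_
    · simp only [hg0, hBdef]; positivity
    · intro x hx hgx
      have hxIcc : x ∈ Icc (0:ℝ) τ := Ico_subset_Icc_self hx
      set ξ : ℝ := β' * x + δ with hξdef
      have hξτ : ξ ≤ β' * τ + δ := by
        have : β' * x ≤ β' * τ := mul_le_mul_of_nonneg_left hx.2.le hβ'pos.le
        simp only [hξdef]; linarith
      have hξ0 : 0 < ξ := by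
        have : 0 ≤ β' * x := mul_nonneg hβ'pos.le hx.1
        simp only [hξdef]; linarith
      have hξlt : ξ < Real.pi / 2 := by
        have hx2 : β' * x < β' * τ := (mul_lt_mul_iff_right₀ hβ'pos).2 hx.2
        have : ξ < β' * τ + δ := by simp only [hξdef]; linarith
        linarith [hθeq]
      have hsin : 0 < Real.sin ξ := Real.sin_pos_of_pos_of_lt_pi hξ0
        (lt_trans hξlt (by linarith [Real.pi_pos]))
      have hcos : 0 < Real.cos ξ := Real.cos_pos_of_mem_Ioo ⟨by linarith [Real.pi_pos], hξlt⟩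
      have hgval : g x = Real.sin ξ ^ 2 := hgx
      have hs1 : Real.sqrt (g x) = Real.sin ξ := by
        rw [hgval, Real.sqrt_sq hsin.le]
      have hs2 : Real.sqrt (1 - g x) = Real.cos ξ := by
        rw [hgval]
        have : 1 - Real.sin ξ ^ 2 = Real.cos ξ ^ 2 := by
          have := Real.sin_sq_add_cos_sq ξ; linarith
        rw [this, Real.sqrt_sq hcos.le]
      have hb := hbound x hxIcc
      rw [hs1, hs2] at hb
      have : gd x ≤ 2 * β * Real.sin ξ * Real.cos ξ := hb
      have hBx : B' x = 2 * Real.sin ξ * (Real.cos ξ * β') := rfl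
      rw [hBx]
      nlinarith [mul_pos hsin hcos]
  have := key (right_mem_Icc.2 hτ.le)
  simpa [hBdef, hθeq] using this

end aux



set_option maxHeartbeats 2000000 in
/-- escape rate bounds success: under the hypotheses of Statement 6, for any
unit vector `α₁` with `‖Π_V α₁‖ ≤ ε`, the overlap of the final state with `α₁` satisfies
`|⟨α₁, ψ(τ)⟩| ≤ sin(βτ) + ε`. -/
theorem stmt_7 (d : ℕ) (H₀ H₁ : Matrix (Fin d) (Fin d) ℂ)
    (hH₀ : H₀.IsHermitian) (hH₁ : H₁.IsHermitian)
    (V : Submodule ℂ (EuclideanSpace ℂ (Fin d)))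
    (hinv : ∀ v ∈ V, Matrix.toEuclideanCLM (𝕜 := ℂ) H₀ v ∈ V)
    (β : ℝ)
    (hesc : ∀ v ∈ V, ‖v‖ = 1 →
      ‖(Submodule.orthogonalProjectionOnto Vᗮ (Matrix.toEuclideanCLM (𝕜 := ℂ) H₁ v) :
        EuclideanSpace ℂ (Fin d))‖ ≤ β)
    (τ : ℝ) (hτ : 0 < τ) (hβτ : β * τ ≤ Real.pi / 2)
    (ψ : ℝ → EuclideanSpace ℂ (Fin d))
    (hψ : ∀ t ∈ Set.Icc (0 : ℝ) τ,
      HasDerivAt ψ ((-Complex.I) • Matrix.toEuclideanCLM (𝕜 := ℂ)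
        (((1 - t / τ : ℝ) : ℂ) • H₀ + ((t / τ : ℝ) : ℂ) • H₁) (ψ t)) t)
    (hψ0V : ψ 0 ∈ V) (hψ0 : ‖ψ 0‖ = 1)
    (α₁ : EuclideanSpace ℂ (Fin d)) (hα₁ : ‖α₁‖ = 1) (ε : ℝ)
    (hα₁V : ‖(Submodule.orthogonalProjectionOnto V α₁ : EuclideanSpace ℂ (Fin d))‖ ≤ ε) :
    ‖(inner ℂ α₁ (ψ τ) : ℂ)‖ ≤ Real.sin (β * τ) + ε := by
  have hβ0 : 0 ≤ β := le_trans (norm_nonneg _) (hesc _ hψ0V hψ0)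
  -- the time-dependent Hamiltonian as a CLM, and the derivative hypothesis in terms of it
  set A : ℝ → EuclideanSpace ℂ (Fin d) →L[ℂ] EuclideanSpace ℂ (Fin d) :=
    fun t => Matrix.toEuclideanCLM (𝕜 := ℂ)
      (((1 - t / τ : ℝ) : ℂ) • H₀ + ((t / τ : ℝ) : ℂ) • H₁) with hAdef
  have hAsum : ∀ t : ℝ, A t = ((1 - t / τ : ℝ) : ℂ) • Matrix.toEuclideanCLM (𝕜 := ℂ) H₀
      + ((t / τ : ℝ) : ℂ) • Matrix.toEuclideanCLM (𝕜 := ℂ) H₁ := by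
    intro t
    simp only [hAdef]
    rw [map_add, map_smul, map_smul]
  have hψA : ∀ t ∈ Set.Icc (0 : ℝ) τ, HasDerivAt ψ ((-Complex.I) • A t (ψ t)) t := by
    intro t ht; simpa [hAdef] using hψ t ht
  -- symmetry of A t
  have hsymM : ∀ (N : Matrix (Fin d) (Fin d) ℂ), N.IsHermitian →
      ∀ x y : EuclideanSpace ℂ (Fin d),
        ⟪Matrix.toEuclideanCLM (𝕜 := ℂ) N x, y⟫ = ⟪x, Matrix.toEuclideanCLM (𝕜 := ℂ) N y⟫ := by
    intro N hN x y
    have h := (Matrix.isHermitian_iff_isSymmetric.mp hN) x y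
    have e : ∀ z, Matrix.toEuclideanCLM (𝕜 := ℂ) N z = Matrix.toEuclideanLin N z := by
      intro z
      rw [← Matrix.coe_toEuclideanCLM_eq_toEuclideanLin]
      rfl
    rw [e, e]; exact h
  have hMh : ∀ t : ℝ, (((1 - t / τ : ℝ) : ℂ) • H₀ + ((t / τ : ℝ) : ℂ) • H₁).IsHermitian := by
    intro t
    have h0 : (((1 - t / τ : ℝ) : ℂ) • H₀).IsHermitian := by
      unfold Matrix.IsHermitian
      rw [Matrix.conjTranspose_smul, hH₀.eq, Complex.star_def, Complex.conj_ofReal]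
    have h1 : (((t / τ : ℝ) : ℂ) • H₁).IsHermitian := by
      unfold Matrix.IsHermitian
      rw [Matrix.conjTranspose_smul, hH₁.eq, Complex.star_def, Complex.conj_ofReal]
    exact h0.add h1
  have hsymA : ∀ (t : ℝ) (x y : EuclideanSpace ℂ (Fin d)), ⟪A t x, y⟫ = ⟪x, A t y⟫ := by
    intro t x y
    exact hsymM _ (hMh t) x y
  -- imaginary part of ⟪x, A t x⟫ vanishes
  have himA : ∀ (t : ℝ) (x : EuclideanSpace ℂ (Fin d)), (⟪x, A t x⟫).im = 0 := by
    intro t x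
    have h1 : (starRingEnd ℂ) ⟪x, A t x⟫ = ⟪x, A t x⟫ := by
      rw [inner_conj_symm]
      exact hsymA t x x
    have := Complex.conj_eq_iff_im.mp h1
    exact this
  -- derivative of the squared norm is zero
  have hD : ∀ t ∈ Set.Icc (0:ℝ) τ,
      HasDerivAt (fun s => (⟪ψ s, ψ s⟫).re) 0 t := by
    intro t ht
    have h1 := (hψA t ht).inner (𝕜 := ℂ) (hψA t ht)
    have h2 := Complex.reCLM.hasFDerivAt.comp_hasDerivAt t h1
    have h0 : ⟪ψ t, (-Complex.I) • A t (ψ t)⟫ + ⟪(-Complex.I) • A t (ψ t), ψ t⟫ = 0 := by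
      rw [inner_smul_right, inner_smul_left, hsymA t (ψ t) (ψ t)]
      simp only [map_neg, Complex.conj_I]
      ring
    rw [h0, map_zero] at h2
    exact h2
  have hnormsq : ∀ t ∈ Set.Icc (0:ℝ) τ, (⟪ψ t, ψ t⟫).re = 1 := by
    have hc := constant_of_has_deriv_right_zero
      (f := fun s => (⟪ψ s, ψ s⟫).re) (a := 0) (b := τ)
      (fun t ht => (hD t ht).continuousAt.continuousWithinAt)
      (fun t ht => (hD t (Ico_subset_Icc_self ht)).hasDerivWithinAt)
    intro t ht
    have h0 : (⟪ψ 0, ψ 0⟫).re = 1 := by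
      have := inner_self_eq_norm_sq (𝕜 := ℂ) (ψ 0)
      simp only [RCLike.re_to_complex] at this
      rw [this, hψ0]; norm_num
    exact (hc t ht).trans h0
  have hnorm : ∀ t ∈ Set.Icc (0:ℝ) τ, ‖ψ t‖ = 1 := by
    intro t ht
    have h1 : ‖ψ t‖ ^ 2 = 1 := by
      have := inner_self_eq_norm_sq (𝕜 := ℂ) (ψ t)
      simp only [RCLike.re_to_complex] at this
      rw [← this, hnormsq t ht]
    have h2 : (‖ψ t‖ - 1) * (‖ψ t‖ + 1) = 0 := by nlinarith
    rcases mul_eq_zero.mp h2 with h | h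
    · linarith
    · nlinarith [norm_nonneg (ψ t)]
  -- projections
  set Q : EuclideanSpace ℂ (Fin d) →L[ℂ] EuclideanSpace ℂ (Fin d) :=
    Vᗮ.subtypeL.comp (Submodule.orthogonalProjectionOnto Vᗮ) with hQdef
  set R : EuclideanSpace ℂ (Fin d) →L[ℂ] EuclideanSpace ℂ (Fin d) :=
    V.subtypeL.comp (Submodule.orthogonalProjectionOnto V) with hRdef
  have hQapp : ∀ x, Q x = (Submodule.orthogonalProjectionOnto Vᗮ x : EuclideanSpace ℂ (Fin d)) :=
    fun x => rfl
  have hRapp : ∀ x, R x = (Submodule.orthogonalProjectionOnto V x : EuclideanSpace ℂ (Fin d)) :=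
    fun x => rfl
  have hsplit : ∀ x, R x + Q x = x := fun x => by
    have h := Submodule.starProjection_add_starProjection_orthogonal (K := V) x
    simp only [Submodule.starProjection_apply] at h
    exact h
  have hRmem : ∀ x, R x ∈ V := fun x => (Submodule.orthogonalProjectionOnto V x).2
  have hQmem : ∀ x, Q x ∈ Vᗮ := fun x => (Submodule.orthogonalProjectionOnto Vᗮ x).2
  have horth : ∀ x z, ⟪Q x, R z⟫ = 0 := fun x z =>
    Submodule.inner_left_of_mem_orthogonal (hRmem z) (hQmem x)
  have hQzero : ∀ v ∈ V, Q v = 0 := by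
    intro v hv
    rw [hQapp, Submodule.orthogonalProjectionOnto_orthogonal_apply_eq_zero hv]
    rfl
  have hpyth : ∀ x : EuclideanSpace ℂ (Fin d), ‖x‖ ^ 2 = ‖R x‖ ^ 2 + ‖Q x‖ ^ 2 := by
    intro x
    have := Submodule.norm_sq_eq_add_norm_sq_projection x V
    simpa [hQapp, hRapp] using this
  -- scaled escape rate
  have escQ : ∀ v ∈ V, ‖Q (Matrix.toEuclideanCLM (𝕜 := ℂ) H₁ v)‖ ≤ β * ‖v‖ := by
    intro v hv
    rcases eq_or_ne v 0 with rfl | hv0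
    · simp
    · have hnv : (0:ℝ) < ‖v‖ := norm_pos_iff.mpr hv0
      set c : ℂ := ((‖v‖⁻¹ : ℝ) : ℂ) with hcdef
      have hu : c • v ∈ V := V.smul_mem c hv
      have hun : ‖c • v‖ = 1 := by
        rw [norm_smul, hcdef]
        simp [abs_of_pos (inv_pos.mpr hnv), inv_mul_cancel₀ (ne_of_gt hnv)]
      have h := hesc (c • v) hu hun
      have h2 : ‖Q (Matrix.toEuclideanCLM (𝕜 := ℂ) H₁ (c • v))‖ ≤ β := by
        rw [hQapp]; exact h
      rw [map_smul, map_smul, norm_smul, hcdef] at h2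
      have habs : ‖((‖v‖⁻¹ : ℝ) : ℂ)‖ = ‖v‖⁻¹ := by
        simp [abs_of_pos (inv_pos.mpr hnv)]
      rw [habs] at h2
      calc ‖Q (Matrix.toEuclideanCLM (𝕜 := ℂ) H₁ v)‖
          = ‖v‖ * (‖v‖⁻¹ * ‖Q (Matrix.toEuclideanCLM (𝕜 := ℂ) H₁ v)‖) := by
            field_simp
        _ ≤ ‖v‖ * β := by
            exact mul_le_mul_of_nonneg_left h2 hnv.le
        _ = β * ‖v‖ := mul_comm _ _
  -- the escape function and its derivative
  set g : ℝ → ℝ := fun t => (⟪Q (ψ t), Q (ψ t)⟫).re with hgdef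
  set gd : ℝ → ℝ :=
    fun t => 2 * (⟪Q (ψ t), Q ((-Complex.I) • A t (ψ t))⟫).re with hgddef
  have hgnorm : ∀ t, g t = ‖Q (ψ t)‖ ^ 2 := by
    intro t
    have := inner_self_eq_norm_sq (𝕜 := ℂ) (Q (ψ t))
    simp only [RCLike.re_to_complex] at this
    simpa [hgdef] using this
  have hg' : ∀ t ∈ Set.Icc (0:ℝ) τ, HasDerivAt g (gd t) t := by
    intro t ht
    have h1 : HasDerivAt (fun s => Q (ψ s)) (Q ((-Complex.I) • A t (ψ t))) t :=
      ((Q.restrictScalars ℝ).hasFDerivAt (x := ψ t)).comp_hasDerivAt t (hψA t ht)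
    have h2 := h1.inner (𝕜 := ℂ) h1
    have h3 := Complex.reCLM.hasFDerivAt.comp_hasDerivAt t h2
    have e : ⟪Q ((-Complex.I) • A t (ψ t)), Q (ψ t)⟫
        = (starRingEnd ℂ) ⟪Q (ψ t), Q ((-Complex.I) • A t (ψ t))⟫ :=
      (inner_conj_symm _ _).symm
    rw [e] at h3
    have hzz : ∀ z : ℂ, (2 : ℝ) * z.re = Complex.reCLM (z + (starRingEnd ℂ) z) := by
      intro z
      simp only [Complex.reCLM_apply, Complex.add_re, Complex.conj_re]
      ring
    have h4 : HasDerivAt (fun s => (⟪Q (ψ s), Q (ψ s)⟫).re)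
        (2 * (⟪Q (ψ t), Q ((-Complex.I) • A t (ψ t))⟫).re) t := by
      rw [hzz]; exact h3
    exact h4
  -- the slope bound
  have hgbound : ∀ t ∈ Set.Icc (0:ℝ) τ,
      gd t ≤ 2 * β * Real.sqrt (g t) * Real.sqrt (1 - g t) := by
    intro t ht
    have hs0 : 0 ≤ t / τ := div_nonneg ht.1 hτ.le
    have hs1 : t / τ ≤ 1 := by
      rw [div_le_one hτ]; exact ht.2
    -- decompose Q (A t (ψ t))
    have hQA : ∀ x : EuclideanSpace ℂ (Fin d),
        Q (A t x) = ((1 - t / τ : ℝ) : ℂ) • Q ((Matrix.toEuclideanCLM (𝕜 := ℂ) H₀) x)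
        + ((t / τ : ℝ) : ℂ) • Q ((Matrix.toEuclideanCLM (𝕜 := ℂ) H₁) x) := by
      intro x
      have hax : A t x = ((1 - t / τ : ℝ) : ℂ) • (Matrix.toEuclideanCLM (𝕜 := ℂ) H₀) x
          + ((t / τ : ℝ) : ℂ) • (Matrix.toEuclideanCLM (𝕜 := ℂ) H₁) x := by
        rw [hAsum t]
        simp only [ContinuousLinearMap.add_apply, ContinuousLinearMap.coe_smul', Pi.smul_apply]
      rw [hax, map_add, map_smul, map_smul]
    -- the V-component contribution
    have hQAR : Q (A t (R (ψ t)))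
        = ((t / τ : ℝ) : ℂ) • Q ((Matrix.toEuclideanCLM (𝕜 := ℂ) H₁) (R (ψ t))) := by
      rw [hQA, hQzero _ (hinv _ (hRmem (ψ t))), smul_zero, zero_add]
    -- the Vᗮ-component contributes zero to the real part
    have hQQreal : (⟪Q (ψ t), ((-Complex.I) • Q (A t (Q (ψ t))))⟫).re = 0 := by
      have he : ⟪Q (ψ t), Q (A t (Q (ψ t)))⟫ = ⟪Q (ψ t), A t (Q (ψ t))⟫ := by
        conv_rhs => rw [← hsplit (A t (Q (ψ t)))]
        rw [inner_add_right, horth, zero_add]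
      rw [inner_smul_right, he]
      have him := himA t (Q (ψ t))
      have hgen : ∀ z : ℂ, z.im = 0 → ((-Complex.I) * z).re = 0 := by
        intro z hz
        rw [Complex.mul_re]
        simp [hz]
      exact hgen _ him
    -- main computation
    have hQψd : Q ((-Complex.I) • A t (ψ t))
        = (-Complex.I) • (((t / τ : ℝ) : ℂ) • Q ((Matrix.toEuclideanCLM (𝕜 := ℂ) H₁) (R (ψ t))))
          + (-Complex.I) • Q (A t (Q (ψ t))) := by
      rw [map_smul]
      rw [← smul_add]
      congr 1
      conv_lhs => rw [← hsplit (ψ t)]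
      rw [map_add, map_add, hQAR]
    have hre : gd t = 2 * (⟪Q (ψ t),
        (-Complex.I) • (((t / τ : ℝ) : ℂ) • Q ((Matrix.toEuclideanCLM (𝕜 := ℂ) H₁) (R (ψ t))))⟫).re := by
      rw [hgddef]
      simp only
      rw [hQψd, inner_add_right, Complex.add_re, hQQreal, add_zero]
    -- bound the remaining term
    have hw : ‖⟪Q (ψ t), Q ((Matrix.toEuclideanCLM (𝕜 := ℂ) H₁) (R (ψ t)))⟫‖
        ≤ ‖Q (ψ t)‖ * (β * ‖R (ψ t)‖) := by
      calc ‖⟪Q (ψ t), Q ((Matrix.toEuclideanCLM (𝕜 := ℂ) H₁) (R (ψ t)))⟫‖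
          ≤ ‖Q (ψ t)‖ * ‖Q ((Matrix.toEuclideanCLM (𝕜 := ℂ) H₁) (R (ψ t)))‖ :=
            norm_inner_le_norm _ _
        _ ≤ ‖Q (ψ t)‖ * (β * ‖R (ψ t)‖) :=
            mul_le_mul_of_nonneg_left (escQ _ (hRmem (ψ t))) (norm_nonneg _)
    have habs : ((⟪Q (ψ t),
        (-Complex.I) • (((t / τ : ℝ) : ℂ) • Q ((Matrix.toEuclideanCLM (𝕜 := ℂ) H₁) (R (ψ t))))⟫).re)
        ≤ (t / τ) * (‖Q (ψ t)‖ * (β * ‖R (ψ t)‖)) := by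
      rw [inner_smul_right, inner_smul_right]
      have h1 : ((-Complex.I) * (((t / τ : ℝ) : ℂ)
          * ⟪Q (ψ t), Q ((Matrix.toEuclideanCLM (𝕜 := ℂ) H₁) (R (ψ t)))⟫)).re
          ≤ ‖(-Complex.I) * (((t / τ : ℝ) : ℂ)
          * ⟪Q (ψ t), Q ((Matrix.toEuclideanCLM (𝕜 := ℂ) H₁) (R (ψ t)))⟫)‖ :=
        Complex.re_le_norm _
      refine le_trans h1 ?_
      rw [norm_mul, norm_mul]
      have h2 : ‖(-Complex.I)‖ = 1 := by simp
      have h3 : ‖((t / τ : ℝ) : ℂ)‖ = t / τ := by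
        rw [Complex.norm_real, Real.norm_eq_abs]
        exact abs_of_nonneg hs0
      rw [h2, h3, one_mul]
      exact mul_le_mul_of_nonneg_left hw hs0
    -- identify the square roots
    have hQn : Real.sqrt (g t) = ‖Q (ψ t)‖ := by
      rw [hgnorm t, Real.sqrt_sq (norm_nonneg _)]
    have hRn : Real.sqrt (1 - g t) = ‖R (ψ t)‖ := by
      have hp := hpyth (ψ t)
      rw [hnorm t ht] at hp
      have : 1 - g t = ‖R (ψ t)‖ ^ 2 := by
        rw [hgnorm t]; nlinarith
      rw [this, Real.sqrt_sq (norm_nonneg _)]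
    rw [hre, hQn, hRn]
    have hfin : (t / τ) * (‖Q (ψ t)‖ * (β * ‖R (ψ t)‖)) ≤ β * ‖Q (ψ t)‖ * ‖R (ψ t)‖ := by
      nlinarith [norm_nonneg (Q (ψ t)), norm_nonneg (R (ψ t)), mul_nonneg (mul_nonneg hβ0 (norm_nonneg (Q (ψ t)))) (norm_nonneg (R (ψ t)))]
    nlinarith [habs]
  -- initial condition
  have hg0 : g 0 = 0 := by
    rw [hgdef]
    simp only
    rw [hQzero _ hψ0V]
    simp
  -- conclude ‖Q (ψ τ)‖ ≤ sin (β τ)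
  have hτmem : τ ∈ Set.Icc (0:ℝ) τ := Set.right_mem_Icc.2 hτ.le
  have hsin0 : 0 ≤ Real.sin (β * τ) :=
    Real.sin_nonneg_of_nonneg_of_le_pi (mul_nonneg hβ0 hτ.le)
      (le_trans hβτ (by linarith [Real.pi_pos]))
  have hQfin : ‖Q (ψ τ)‖ ≤ Real.sin (β * τ) := by
    by_cases hlt : β * τ < Real.pi / 2
    · have hθ : ∀ θ ∈ Set.Ioo (β * τ) (Real.pi / 2), g τ ≤ Real.sin θ ^ 2 := by
        intro θ hθ'
        exact gronwall_sin_sq g gd β τ hβ0 hτ hg' hg0 hgbound θ hθ'.1 hθ'.2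
      have hten : Filter.Tendsto (fun θ => Real.sin θ ^ 2)
          (nhdsWithin (β * τ) (Set.Ioi (β * τ))) (nhds (Real.sin (β * τ) ^ 2)) :=
        ((Real.continuous_sin.pow 2).tendsto (β * τ)).mono_left nhdsWithin_le_nhds
      have hev : ∀ᶠ θ in nhdsWithin (β * τ) (Set.Ioi (β * τ)), g τ ≤ Real.sin θ ^ 2 :=
        Filter.eventually_of_mem (Ioo_mem_nhdsGT_of_mem ⟨le_refl _, hlt⟩)
          (fun θ hθ' => hθ θ hθ')
      have hgτ : g τ ≤ Real.sin (β * τ) ^ 2 := ge_of_tendsto hten hev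
      rw [hgnorm τ] at hgτ
      nlinarith [norm_nonneg (Q (ψ τ))]
    · have heq : β * τ = Real.pi / 2 := le_antisymm hβτ (not_lt.mp hlt)
      rw [heq, Real.sin_pi_div_two]
      have hp := hpyth (ψ τ)
      rw [hnorm τ hτmem] at hp
      nlinarith [norm_nonneg (Q (ψ τ)), norm_nonneg (R (ψ τ))]
  -- final assembly
  have hRα : ⟪α₁, R (ψ τ)⟫ = ⟪R α₁, ψ τ⟫ := by
    rw [hRapp, hRapp]
    have h := (Submodule.inner_starProjection_left_eq_right V α₁ (ψ τ)).symm
    simp only [Submodule.starProjection_apply] at h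
    exact h
  have hsplitτ := hsplit (ψ τ)
  calc ‖(inner ℂ α₁ (ψ τ) : ℂ)‖
      = ‖⟪α₁, R (ψ τ)⟫ + ⟪α₁, Q (ψ τ)⟫‖ := by
        rw [← inner_add_right, hsplitτ]
    _ ≤ ‖⟪α₁, R (ψ τ)⟫‖ + ‖⟪α₁, Q (ψ τ)⟫‖ := norm_add_le _ _
    _ ≤ Real.sin (β * τ) + ε := by
        have h1 : ‖⟪α₁, R (ψ τ)⟫‖ ≤ ε := by
          rw [hRα]
          calc ‖⟪R α₁, ψ τ⟫‖ ≤ ‖R α₁‖ * ‖ψ τ‖ := norm_inner_le_norm _ _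
            _ = ‖R α₁‖ := by rw [hnorm τ hτmem, mul_one]
            _ ≤ ε := by rw [hRapp]; exact hα₁V
        have h2 : ‖⟪α₁, Q (ψ τ)⟫‖ ≤ Real.sin (β * τ) := by
          calc ‖⟪α₁, Q (ψ τ)⟫‖ ≤ ‖α₁‖ * ‖Q (ψ τ)‖ := norm_inner_le_norm _ _
            _ = ‖Q (ψ τ)‖ := by rw [hα₁, one_mul]
            _ ≤ Real.sin (β * τ) := hQfin
        linarith
end

section
/- Let {w_i}_{i=1}^N be an orthonormal basis of a finite-dimensional complex Hilbert space ℋ of dimension N, and let X be a subspace of ℋ. For any natural number d ≤ N there exists a set D of d basis indices such that the subspace W = span{w_i : i ∈ D} satisfies ‖Π_W Π_X‖² ≤ d · (dim X)/N, where Π_W, Π_X are the orthogonal projections onto W and X and ‖·‖ is the operator norm. -/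
open scoped InnerProductSpace

/-- Parseval for an orthonormal basis. -/
lemma onb_norm_sq_eq_sum {E : Type*} [NormedAddCommGroup E] [InnerProductSpace ℂ E]
    {ι : Type*} [Fintype ι] (b : OrthonormalBasis ι ℂ E) (x : E) :
    ‖x‖ ^ 2 = ∑ i, ‖⟪b i, x⟫_ℂ‖ ^ 2 := by
  rw [← b.repr.norm_map x, EuclideanSpace.norm_eq,
    Real.sq_sqrt (by positivity)]
  simp [b.repr_apply_apply]

/-- Pick `d` indices with small sum. -/
lemma pick_small_sum {N : ℕ} (f : Fin N → ℝ) (hf : ∀ i, 0 ≤ f i) (d : ℕ) (hd : d ≤ N) :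
    ∃ D : Finset (Fin N), D.card = d ∧ (N : ℝ) * ∑ i ∈ D, f i ≤ d * ∑ i, f i := by
  induction d with
  | zero =>
    exact ⟨∅, rfl, by simp⟩
  | succ d ih =>
    obtain ⟨D, hcard, hsum⟩ := ih (Nat.le_of_succ_le hd)
    have hdN : d < N := hd
    have hcompl : (Dᶜ : Finset (Fin N)).Nonempty := by
      rw [← Finset.card_pos, Finset.card_compl, hcard, Fintype.card_fin]; omega
    obtain ⟨i, hiDc, hmin⟩ := Finset.exists_min_image (Dᶜ) f hcompl
    have hiD : i ∉ D := Finset.mem_compl.mp hiDc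
    have hcardc : (Dᶜ : Finset (Fin N)).card = N - d := by
      rw [Finset.card_compl, hcard, Fintype.card_fin]
    have hle : ((N - d : ℕ) : ℝ) * f i ≤ ∑ j ∈ Dᶜ, f j := by
      have := Finset.card_nsmul_le_sum (Dᶜ) f (f i) hmin
      rwa [hcardc, nsmul_eq_mul] at this
    have hsplit : ∑ j ∈ D, f j + ∑ j ∈ Dᶜ, f j = ∑ j, f j :=
      Finset.sum_add_sum_compl D f
    refine ⟨insert i D, by rw [Finset.card_insert_of_notMem hiD, hcard], ?_⟩
    rw [Finset.sum_insert hiD]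
    have hT : (0 : ℝ) ≤ ∑ j ∈ D, f j := Finset.sum_nonneg fun j _ => hf j
    have hcast : ((N - d : ℕ) : ℝ) = (N : ℝ) - d := by
      push_cast [Nat.cast_sub hdN.le]; ring
    rw [hcast] at hle
    have hdN' : (d : ℝ) + 1 ≤ N := by exact_mod_cast hd
    set S := ∑ j, f j
    set T := ∑ j ∈ D, f j
    have hle' : ((N : ℝ) - d) * f i ≤ S - T := by linarith [hsplit]
    push_cast
    nlinarith [hf i, mul_nonneg hT (sub_nonneg.mpr hdN' : (0:ℝ) ≤ (N:ℝ) - (d+1))]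

/-- for any orthonormal basis `{w_i}` of an `N`-dimensional complex Hilbert
space `ℋ` and any subspace `X`, for every `d ≤ N` there is a set `D` of `d` basis indices
such that `W = span{w_i : i ∈ D}` satisfies `‖Π_W Π_X‖² ≤ d · dim X / N`. -/
theorem stmt_9 (N : ℕ) (ℋ : Type*) [NormedAddCommGroup ℋ] [InnerProductSpace ℂ ℋ]
    [FiniteDimensional ℂ ℋ] (hdim : Module.finrank ℂ ℋ = N)
    (w : OrthonormalBasis (Fin N) ℂ ℋ)
    (X : Submodule ℂ ℋ) (d : ℕ) (hd : d ≤ N) :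
    ∃ D : Finset (Fin N), D.card = d ∧
      ‖((Submodule.span ℂ (w '' D)).subtypeL.comp
            (Submodule.orthogonalProjectionOnto (Submodule.span ℂ (w '' D)))).comp
          (X.subtypeL.comp (Submodule.orthogonalProjectionOnto X))‖ ^ 2
        ≤ (d : ℝ) * (Module.finrank ℂ X) / N := by
  classical
  rcases Nat.eq_zero_or_pos N with hN | hN
  · subst hN
    obtain rfl : d = 0 := Nat.le_zero.mp hd
    haveI : Subsingleton ℋ := Module.finrank_zero_iff.mp hdim
    refine ⟨∅, rfl, ?_⟩
    have hz : ((Submodule.span ℂ (w '' (∅ : Finset (Fin 0)))).subtypeL.comp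
            (Submodule.orthogonalProjectionOnto (Submodule.span ℂ (w '' (∅ : Finset (Fin 0)))))).comp
          (X.subtypeL.comp (Submodule.orthogonalProjectionOnto X)) = 0 :=
      ContinuousLinearMap.ext fun x => Subsingleton.elim _ _
    rw [hz, norm_zero]
    norm_num
  -- main case
  set f : Fin N → ℝ := fun i => ‖(Submodule.orthogonalProjectionOnto X (w i) : ℋ)‖ ^ 2 with hf_def
  obtain ⟨D, hcard, hDsum⟩ := pick_small_sum f (fun i => sq_nonneg _) d hd
  have htrace : ∑ i, f i = (Module.finrank ℂ X : ℝ) := by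
    set v := stdOrthonormalBasis ℂ X with hv
    have h1 : ∀ i, f i = ∑ j, ‖⟪((v j : X) : ℋ), w i⟫_ℂ‖ ^ 2 := by
      intro i
      show ‖(Submodule.orthogonalProjectionOnto X (w i) : ℋ)‖ ^ 2 = _
      rw [Submodule.norm_coe, onb_norm_sq_eq_sum v]
      exact Finset.sum_congr rfl fun j _ => by
        rw [Submodule.inner_orthogonalProjectionOnto_eq_of_mem_left]
    calc ∑ i, f i = ∑ i, ∑ j, ‖⟪((v j : X) : ℋ), w i⟫_ℂ‖ ^ 2 :=
          Finset.sum_congr rfl fun i _ => h1 i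
      _ = ∑ j, ∑ i, ‖⟪w i, ((v j : X) : ℋ)⟫_ℂ‖ ^ 2 := by
          rw [Finset.sum_comm]
          exact Finset.sum_congr rfl fun j _ => Finset.sum_congr rfl fun i _ => by
            rw [norm_inner_symm]
      _ = ∑ j : Fin (Module.finrank ℂ X), (1 : ℝ) := by
          refine Finset.sum_congr rfl fun j _ => ?_
          rw [← onb_norm_sq_eq_sum w, Submodule.norm_coe]
          simp [v.orthonormal.1 j]
      _ = (Module.finrank ℂ X : ℝ) := by simp
  refine ⟨D, hcard, ?_⟩
  rw [show Submodule.span ℂ (w '' ↑D) = Submodule.span ℂ ((D.image w : Finset ℋ) : Set ℋ) by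
    rw [Finset.coe_image]]
  set W := Submodule.span ℂ ((D.image w : Finset ℋ) : Set ℋ) with hWdef
  set T := (W.subtypeL.comp (Submodule.orthogonalProjectionOnto W)).comp
      (X.subtypeL.comp (Submodule.orthogonalProjectionOnto X)) with hT
  set S := ∑ i ∈ D, f i with hS
  have hSnn : 0 ≤ S := Finset.sum_nonneg fun i _ => sq_nonneg _
  set b : OrthonormalBasis D ℂ W := OrthonormalBasis.span w.orthonormal D with hb
  have key : ∀ x : ℋ, ‖T x‖ ^ 2 ≤ S * ‖x‖ ^ 2 := by
    intro x
    have hTx : T x = (Submodule.orthogonalProjectionOnto W ((Submodule.orthogonalProjectionOnto X x : ℋ)) : ℋ) := rfl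
    rw [hTx, Submodule.norm_coe, onb_norm_sq_eq_sum b]
    have hterm : ∀ i : D, ‖⟪b i, Submodule.orthogonalProjectionOnto W ((Submodule.orthogonalProjectionOnto X x : ℋ))⟫_ℂ‖ ^ 2
        ≤ f (i : Fin N) * ‖x‖ ^ 2 := by
      intro i
      rw [Submodule.inner_orthogonalProjectionOnto_eq_of_mem_left, hb, OrthonormalBasis.span_apply,
        ← Submodule.starProjection_apply, ← Submodule.inner_starProjection_left_eq_right,
        Submodule.starProjection_apply]
      calc ‖⟪(Submodule.orthogonalProjectionOnto X (w (i : Fin N)) : ℋ), x⟫_ℂ‖ ^ 2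
          ≤ (‖(Submodule.orthogonalProjectionOnto X (w (i : Fin N)) : ℋ)‖ * ‖x‖) ^ 2 :=
            pow_le_pow_left₀ (norm_nonneg _) (norm_inner_le_norm _ _) 2
        _ = f (i : Fin N) * ‖x‖ ^ 2 := by rw [mul_pow]
    calc ∑ i : D, ‖⟪b i, Submodule.orthogonalProjectionOnto W ((Submodule.orthogonalProjectionOnto X x : ℋ))⟫_ℂ‖ ^ 2
        ≤ ∑ i : D, f (i : Fin N) * ‖x‖ ^ 2 := Finset.sum_le_sum fun i _ => hterm i
      _ = S * ‖x‖ ^ 2 := by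
          rw [hS, ← Finset.sum_mul]
          congr 1
          exact Finset.sum_coe_sort D f
  have hnorm : ‖T‖ ≤ Real.sqrt S := by
    refine T.opNorm_le_bound (Real.sqrt_nonneg _) fun x => ?_
    calc ‖T x‖ = Real.sqrt (‖T x‖ ^ 2) := (Real.sqrt_sq (norm_nonneg _)).symm
      _ ≤ Real.sqrt (S * ‖x‖ ^ 2) := Real.sqrt_le_sqrt (key x)
      _ = Real.sqrt S * ‖x‖ := by
          rw [Real.sqrt_mul hSnn, Real.sqrt_sq (norm_nonneg _)]
  have h2 : ‖T‖ ^ 2 ≤ S := by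
    have := pow_le_pow_left₀ (norm_nonneg _) hnorm 2
    rwa [Real.sq_sqrt hSnn] at this
  have hNpos : (0 : ℝ) < N := by exact_mod_cast hN
  refine h2.trans ?_
  rw [le_div_iff₀ hNpos]
  calc S * N = N * S := mul_comm _ _
    _ ≤ d * ∑ i, f i := hDsum
    _ = d * (Module.finrank ℂ X : ℝ) := by rw [htrace]
end

section
/- (Robustness by confinement.) Let H(t) be a continuous family of Hermitian matrices on ℂ^N, let ψ : [0,τ] → ℂ^N be differentiable with ψ'(t) = −i H(t) ψ(t) and ‖ψ(0)‖ = 1, and suppose there is a subspace X with ‖Π_{X⊥} ψ(t)‖ ≤ η for all t ∈ [0,τ]. Let {w_i}_{i=1}^N be any orthonormal basis of ℂ^N and let d ≤ N. Then there exists a set D of d basis indices, with W = span{w_i : i ∈ D}, such that for every continuous family of Hermitian matrices δH(t) whose image is contained in W and with ‖δH(t)‖ ≤ g_max for all t, the solution ψ̃ of ψ̃'(t) = −i(H(t) + δH(t))ψ̃(t) with ψ̃(0) = ψ(0) satisfies ‖ψ(τ) − ψ̃(τ)‖ ≤ τ g_max (√(d · (dim X)/N) + η). -/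
open scoped InnerProductSpace

open Submodule

set_option maxHeartbeats 1000000

theorem aux_select {N : ℕ} (f : Fin N → ℝ) (d : ℕ) (hd : d ≤ N) :
    ∃ D : Finset (Fin N), D.card = d ∧ (N : ℝ) * ∑ i ∈ D, f i ≤ d * ∑ i, f i := by
  classical
  have key : ∀ d ≤ N, ∃ D : Finset (Fin N), D.card = d ∧
      ∀ i ∈ D, ∀ j ∉ D, f i ≤ f j := by
    intro d
    induction d with
    | zero => intro _; exact ⟨∅, rfl, by simp⟩
    | succ k ih =>
      intro hk
      obtain ⟨D, hcard, hP⟩ := ih (Nat.le_of_succ_le hk)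
      have hne : (Dᶜ : Finset (Fin N)).Nonempty := by
        rw [← Finset.card_pos, Finset.card_compl, Fintype.card_fin, hcard]
        omega
      obtain ⟨j, hjmem, hjmin⟩ := Finset.exists_min_image Dᶜ f hne
      have hjD : j ∉ D := Finset.mem_compl.mp hjmem
      refine ⟨insert j D, by rw [Finset.card_insert_of_notMem hjD, hcard], ?_⟩
      intro i hi k hk'
      have hkD : k ∉ D := fun h => hk' (Finset.mem_insert_of_mem h)
      rcases Finset.mem_insert.mp hi with rfl | hiD
      · exact hjmin k (Finset.mem_compl.mpr hkD)
      · exact hP i hiD k hkD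
  obtain ⟨D, hcard, hP⟩ := key d hd
  refine ⟨D, hcard, ?_⟩
  have h1 : (Dᶜ.card : ℝ) * ∑ i ∈ D, f i ≤ (D.card : ℝ) * ∑ j ∈ Dᶜ, f j := by
    have h := Finset.sum_le_sum (s := Dᶜ)
      (f := fun _j => ∑ i ∈ D, f i) (g := fun j => ∑ _i ∈ D, f j)
      (fun j hj => Finset.sum_le_sum fun i hi => hP i hi j (Finset.mem_compl.mp hj))
    simp only [Finset.sum_const, smul_eq_mul, nsmul_eq_mul] at h
    rw [← Finset.mul_sum] at h
    linarith [h]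
  have h2 : ∑ i ∈ D, f i + ∑ j ∈ Dᶜ, f j = ∑ i, f i := Finset.sum_add_sum_compl D f
  have h3 : (Dᶜ.card : ℝ) = (N : ℝ) - d := by
    rw [Finset.card_compl, Fintype.card_fin, hcard, Nat.cast_sub hd]
  rw [h3, hcard] at h1
  have h4 : (N : ℝ) * ∑ i ∈ D, f i
      = ((N : ℝ) - d) * ∑ i ∈ D, f i + (d : ℝ) * ∑ i ∈ D, f i := by ring
  have h5 : (d : ℝ) * ∑ i, f i = (d : ℝ) * ∑ i ∈ D, f i + (d : ℝ) * ∑ j ∈ Dᶜ, f j := by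
    rw [← h2]; ring
  linarith

theorem aux_parseval {ι E : Type*} [NormedAddCommGroup E] [InnerProductSpace ℂ E] [Fintype ι]
    (b : OrthonormalBasis ι ℂ E) (x : E) : ∑ i, ‖⟪b i, x⟫_ℂ‖ ^ 2 = ‖x‖ ^ 2 := by
  have h := b.repr.norm_map x
  rw [← h, EuclideanSpace.norm_eq, Real.sq_sqrt (by positivity)]
  congr 1
  ext i
  rw [b.repr_apply_apply]

theorem aux_trace {N : ℕ} (X : Submodule ℂ (EuclideanSpace ℂ (Fin N)))
    (w : OrthonormalBasis (Fin N) ℂ (EuclideanSpace ℂ (Fin N))) :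
    ∑ i, ‖(orthogonalProjection X (w i) : EuclideanSpace ℂ (Fin N))‖ ^ 2
      = (Module.finrank ℂ X : ℝ) := by
  set E := EuclideanSpace ℂ (Fin N)
  let v := stdOrthonormalBasis ℂ X
  have step1 : ∀ i, ‖(orthogonalProjection X (w i) : E)‖ ^ 2
      = ∑ j, ‖⟪(v j : E), w i⟫_ℂ‖ ^ 2 := by
    intro i
    have h1 : ‖(orthogonalProjection X (w i) : E)‖ = ‖orthogonalProjection X (w i)‖ := rfl
    rw [h1, ← aux_parseval v (orthogonalProjection X (w i))]
    congr 1
    ext j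
    rw [inner_orthogonalProjection_eq_of_mem_left]
  calc ∑ i, ‖(orthogonalProjection X (w i) : E)‖ ^ 2
      = ∑ i, ∑ j, ‖⟪(v j : E), w i⟫_ℂ‖ ^ 2 := by simp_rw [step1]
    _ = ∑ j, ∑ i, ‖⟪w i, (v j : E)⟫_ℂ‖ ^ 2 := by
        rw [Finset.sum_comm]
        congr 1; ext j; congr 1; ext i
        rw [← inner_conj_symm, RCLike.norm_conj]
    _ = ∑ j : Fin (Module.finrank ℂ X), (1 : ℝ) := by
        congr 1; ext j
        rw [aux_parseval w ((v j : E))]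
        have : ‖(v j : E)‖ = 1 := by
          have := v.orthonormal.1 j
          exact this
        rw [this]; norm_num
    _ = (Module.finrank ℂ X : ℝ) := by simp

theorem aux_symm {N : ℕ} {A : Matrix (Fin N) (Fin N) ℂ} (hA : A.IsHermitian)
    (x y : EuclideanSpace ℂ (Fin N)) :
    ⟪Matrix.toEuclideanCLM (𝕜 := ℂ) A x, y⟫_ℂ = ⟪x, Matrix.toEuclideanCLM (𝕜 := ℂ) A y⟫_ℂ := by
  have h := Matrix.isHermitian_iff_isSymmetric.mp hA
  have happ : ∀ z : EuclideanSpace ℂ (Fin N),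
      Matrix.toEuclideanCLM (𝕜 := ℂ) A z = Matrix.toEuclideanLin A z := by
    intro z
    rw [← Matrix.coe_toEuclideanCLM_eq_toEuclideanLin]
    rfl
  rw [happ, happ]
  exact h x y

/-- robustness by confinement: if the path `ψ` of `ψ' = −iH(t)ψ` stays
`η`-close to a subspace `X` (`‖Π_{X⊥} ψ(t)‖ ≤ η` on `[0,τ]`), then for any orthonormal
basis `{w_i}` of `ℂ^N` and any `d ≤ N` there is a set `D` of `d` basis indices, with
`W = span{w_i : i ∈ D}`, such that every Hermitian perturbation `δH(t)` with image in `W`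
and `‖δH(t)‖ ≤ g_max` shifts the final state by at most
`τ g_max (√(d · dim X / N) + η)`. -/
theorem stmt_11 (N : ℕ) (τ η g_max : ℝ) (hτ : 0 ≤ τ)
    (H : ℝ → Matrix (Fin N) (Fin N) ℂ)
    (hHcont : ContinuousOn H (Set.Icc 0 τ))
    (hHherm : ∀ t ∈ Set.Icc (0 : ℝ) τ, (H t).IsHermitian)
    (ψ : ℝ → EuclideanSpace ℂ (Fin N))
    (hψ : ∀ t ∈ Set.Icc (0 : ℝ) τ,
      HasDerivAt ψ ((-Complex.I) • Matrix.toEuclideanCLM (𝕜 := ℂ) (H t) (ψ t)) t)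
    (hψ0 : ‖ψ 0‖ = 1)
    (X : Submodule ℂ (EuclideanSpace ℂ (Fin N)))
    (hX : ∀ t ∈ Set.Icc (0 : ℝ) τ,
      ‖(Submodule.orthogonalProjection Xᗮ (ψ t) : EuclideanSpace ℂ (Fin N))‖ ≤ η)
    (w : OrthonormalBasis (Fin N) ℂ (EuclideanSpace ℂ (Fin N)))
    (d : ℕ) (hd : d ≤ N) :
    ∃ D : Finset (Fin N), D.card = d ∧
      ∀ (δH : ℝ → Matrix (Fin N) (Fin N) ℂ) (ψt : ℝ → EuclideanSpace ℂ (Fin N)),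
        ContinuousOn δH (Set.Icc 0 τ) →
        (∀ t ∈ Set.Icc (0 : ℝ) τ, (δH t).IsHermitian) →
        (∀ t ∈ Set.Icc (0 : ℝ) τ, ∀ x, Matrix.toEuclideanCLM (𝕜 := ℂ) (δH t) x
          ∈ Submodule.span ℂ (w '' D)) →
        (∀ t ∈ Set.Icc (0 : ℝ) τ, ‖Matrix.toEuclideanCLM (𝕜 := ℂ) (δH t)‖ ≤ g_max) →
        (∀ t ∈ Set.Icc (0 : ℝ) τ,
          HasDerivAt ψt ((-Complex.I) • Matrix.toEuclideanCLM (𝕜 := ℂ)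
            (H t + δH t) (ψt t)) t) →
        ψt 0 = ψ 0 →
        ‖ψ τ - ψt τ‖ ≤ τ * g_max *
          (Real.sqrt ((d : ℝ) * (Module.finrank ℂ X) / N) + η) := by
  classical
  set f : Fin N → ℝ :=
    fun i => ‖(orthogonalProjection X (w i) : EuclideanSpace ℂ (Fin N))‖ ^ 2 with hf_def
  obtain ⟨D, hDcard, hDsum⟩ := aux_select f d hd
  have htrace : ∑ i, f i = (Module.finrank ℂ X : ℝ) := aux_trace X w
  set c : ℝ := Real.sqrt ((d : ℝ) * (Module.finrank ℂ X) / N) with hc_def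
  have hc0 : 0 ≤ c := Real.sqrt_nonneg _
  have hc2 : ∑ i ∈ D, f i ≤ c ^ 2 := by
    rw [hc_def, Real.sq_sqrt (by positivity)]
    rcases Nat.eq_zero_or_pos N with hN | hN
    · have hD : D = ∅ := by
        subst hN
        exact Finset.eq_empty_of_isEmpty D
      rw [hD]
      simp
      positivity
    · rw [le_div_iff₀ (by positivity)]
      rw [htrace] at hDsum
      linarith
  refine ⟨D, hDcard, ?_⟩
  intro δH ψt hδcont hδherm hδspan hδnorm hψt hinit
  have h0mem : (0 : ℝ) ∈ Set.Icc (0 : ℝ) τ := ⟨le_refl 0, hτ⟩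
  have hgmax0 : 0 ≤ g_max := le_trans (norm_nonneg _) (hδnorm 0 h0mem)
  have hη0 : 0 ≤ η := le_trans (norm_nonneg _) (hX 0 h0mem)
  -- norm conservation for ψ
  have hψnorm : ∀ t ∈ Set.Icc (0 : ℝ) τ, ‖ψ t‖ = 1 := by
    have hG : ∀ t ∈ Set.Icc (0 : ℝ) τ, HasDerivAt (fun s => ⟪ψ s, ψ s⟫_ℂ) 0 t := by
      intro t ht
      have hdr := (hψ t ht).inner ℂ (hψ t ht)
      refine hdr.congr_deriv ?_
      rw [inner_smul_right, inner_smul_left, aux_symm (hHherm t ht)]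
      simp [Complex.conj_I]
    have hF : ∀ t ∈ Set.Icc (0 : ℝ) τ,
        HasDerivAt (fun s => RCLike.re (K := ℂ) ⟪ψ s, ψ s⟫_ℂ) 0 t := by
      intro t ht
      have h2 := (RCLike.reCLM (K := ℂ)).hasFDerivAt.comp_hasDerivAt t (hG t ht)
      simpa only [Function.comp_def, map_zero, RCLike.reCLM_apply] using h2
    have hconst := constant_of_has_deriv_right_zero
      (f := fun s => RCLike.re (K := ℂ) ⟪ψ s, ψ s⟫_ℂ) (a := 0) (b := τ)
      (fun t ht => (hF t ht).continuousAt.continuousWithinAt)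
      (fun t ht => (hF t (Set.mem_Icc_of_Ico ht)).hasDerivWithinAt)
    intro t ht
    have h1 := hconst t ht
    simp only [inner_self_eq_norm_sq (𝕜 := ℂ), hψ0, one_pow] at h1
    rw [← Real.sqrt_sq (norm_nonneg (ψ t)), h1, Real.sqrt_one]
  -- key pointwise bound
  have hkey : ∀ t ∈ Set.Icc (0 : ℝ) τ,
      ‖Matrix.toEuclideanCLM (𝕜 := ℂ) (δH t) (ψ t)‖ ≤ g_max * (c + η) := by
    intro t ht
    set T := Matrix.toEuclideanCLM (𝕜 := ℂ) (δH t) with hT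
    have hTnorm : ‖T‖ ≤ g_max := hδnorm t ht
    have hsym : ∀ x y : EuclideanSpace ℂ (Fin N), ⟪T x, y⟫_ℂ = ⟪x, T y⟫_ℂ :=
      fun x y => aux_symm (hδherm t ht) x y
    have hspan := hδspan t ht
    have hker : ∀ y : EuclideanSpace ℂ (Fin N),
        y ∈ (Submodule.span ℂ (w '' ↑D))ᗮ → T y = 0 := by
      intro y hy
      have h1 : ⟪T y, T y⟫_ℂ = 0 := by
        rw [hsym y (T y)]
        have h2 := Submodule.inner_right_of_mem_orthogonal (hspan (T y)) hy
        rw [← inner_conj_symm, h2, map_zero]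
      exact inner_self_eq_zero.mp h1
    set a : EuclideanSpace ℂ (Fin N) := ↑(orthogonalProjection X (ψ t)) with ha
    set o : EuclideanSpace ℂ (Fin N) := ↑(orthogonalProjection Xᗮ (ψ t)) with ho
    have hdec : ψ t = a + o :=
      (Submodule.starProjection_add_starProjection_orthogonal (K := X) (ψ t)).symm
    have hTo : ‖T o‖ ≤ g_max * η :=
      le_trans (T.le_opNorm o) (mul_le_mul hTnorm (hX t ht) (norm_nonneg _) hgmax0)
    set P : EuclideanSpace ℂ (Fin N) := ∑ i ∈ D, ⟪w i, a⟫_ℂ • w i with hP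
    have hTaP : T a = T P := by
      have hmem : a - P ∈ (Submodule.span ℂ (w '' ↑D))ᗮ := by
        rw [Submodule.mem_orthogonal]
        intro u hu
        refine Submodule.span_induction ?_ ?_ ?_ ?_ hu
        · rintro u ⟨i, hi, rfl⟩
          rw [inner_sub_right]
          have hii : ⟪w i, P⟫_ℂ = ⟪w i, a⟫_ℂ := by
            rw [hP]
            exact w.orthonormal.inner_right_sum (fun j => ⟪w j, a⟫_ℂ) (Finset.mem_coe.mp hi)
          rw [hii, sub_self]
        · simp
        · intro x y _ _ hx hy; rw [inner_add_left, hx, hy, add_zero]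
        · intro r x _ hx; rw [inner_smul_left, hx, mul_zero]
      have h3 := hker _ hmem
      rw [map_sub] at h3
      exact sub_eq_zero.mp h3
    have e1 : ⟪P, P⟫_ℂ = ∑ i ∈ D, (starRingEnd ℂ) ⟪w i, a⟫_ℂ * ⟪w i, a⟫_ℂ := by
      rw [hP, sum_inner]
      refine Finset.sum_congr rfl fun i hi => ?_
      rw [inner_smul_left, w.orthonormal.inner_right_sum (fun j => ⟪w j, a⟫_ℂ) hi]
    have hPnorm2 : ‖P‖ ^ 2 = ∑ i ∈ D, ‖⟪w i, a⟫_ℂ‖ ^ 2 := by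
      rw [← inner_self_eq_norm_sq (𝕜 := ℂ), e1, map_sum]
      refine Finset.sum_congr rfl fun i _ => ?_
      rw [RCLike.conj_mul]
      norm_cast
    have hterm : ∀ i, ‖⟪w i, a⟫_ℂ‖ ^ 2 ≤ f i := by
      intro i
      have h1 : ⟪w i, a⟫_ℂ
          = ⟪(orthogonalProjection X (w i) : EuclideanSpace ℂ (Fin N)), ψ t⟫_ℂ := by
        rw [ha]; exact (Submodule.inner_starProjection_left_eq_right X _ _).symm
      rw [h1, hf_def]
      calc ‖⟪(orthogonalProjection X (w i) : EuclideanSpace ℂ (Fin N)), ψ t⟫_ℂ‖ ^ 2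
          ≤ (‖(orthogonalProjection X (w i) : EuclideanSpace ℂ (Fin N))‖ * ‖ψ t‖) ^ 2 := by
            apply pow_le_pow_left₀ (norm_nonneg _) (norm_inner_le_norm _ _)
        _ = ‖(orthogonalProjection X (w i) : EuclideanSpace ℂ (Fin N))‖ ^ 2 := by
            rw [hψnorm t ht]; ring
    have hPle : ‖P‖ ≤ c := by
      have h1 : ‖P‖ ^ 2 ≤ c ^ 2 := by
        rw [hPnorm2]
        exact le_trans (Finset.sum_le_sum fun i _ => hterm i) hc2
      rw [← Real.sqrt_sq (norm_nonneg P), ← Real.sqrt_sq hc0]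
      exact Real.sqrt_le_sqrt h1
    calc ‖T (ψ t)‖ = ‖T a + T o‖ := by rw [hdec, map_add]
      _ ≤ ‖T a‖ + ‖T o‖ := norm_add_le _ _
      _ = ‖T P‖ + ‖T o‖ := by rw [hTaP]
      _ ≤ g_max * c + g_max * η :=
          add_le_add (le_trans (T.le_opNorm P)
            (mul_le_mul hTnorm hPle (norm_nonneg _) hgmax0)) hTo
      _ = g_max * (c + η) := by ring
  -- the difference path
  set g : ℝ → EuclideanSpace ℂ (Fin N) := fun t => ψt t - ψ t with hg_def
  set b : ℝ → EuclideanSpace ℂ (Fin N) :=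
    fun t => (-Complex.I) • (Matrix.toEuclideanCLM (𝕜 := ℂ) (δH t) (ψ t)) with hb_def
  set C : ℝ := g_max * (c + η) with hC_def
  have hC0 : 0 ≤ C := mul_nonneg hgmax0 (add_nonneg hc0 hη0)
  have hbnorm : ∀ t ∈ Set.Icc (0 : ℝ) τ, ‖b t‖ ≤ C := by
    intro t ht
    rw [hb_def]
    simp only [norm_smul, norm_neg, Complex.norm_I]
    simpa using hkey t ht
  have hgderiv : ∀ t ∈ Set.Icc (0 : ℝ) τ, HasDerivAt g
      ((-Complex.I) • (Matrix.toEuclideanCLM (𝕜 := ℂ) (H t + δH t) (g t)) + b t) t := by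
    intro t ht
    have hdr := (hψt t ht).sub (hψ t ht)
    refine hdr.congr_deriv ?_
    have hadd : Matrix.toEuclideanCLM (𝕜 := ℂ) (H t + δH t)
        = Matrix.toEuclideanCLM (𝕜 := ℂ) (H t) + Matrix.toEuclideanCLM (𝕜 := ℂ) (δH t) :=
      map_add _ _ _
    rw [hadd, hb_def, hg_def]
    simp only [ContinuousLinearMap.add_apply, map_sub, smul_sub, smul_add]
    abel
  have hh : ∀ t ∈ Set.Icc (0 : ℝ) τ,
      HasDerivAt (fun s => RCLike.re (K := ℂ) ⟪g s, g s⟫_ℂ)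
        (2 * RCLike.re (K := ℂ) ⟪g t, b t⟫_ℂ) t := by
    intro t ht
    have hdr := (hgderiv t ht).inner ℂ (hgderiv t ht)
    have hval : ⟪g t, (-Complex.I) • (Matrix.toEuclideanCLM (𝕜 := ℂ) (H t + δH t) (g t)) + b t⟫_ℂ
          + ⟪(-Complex.I) • (Matrix.toEuclideanCLM (𝕜 := ℂ) (H t + δH t) (g t)) + b t, g t⟫_ℂ
        = ⟪g t, b t⟫_ℂ + ⟪b t, g t⟫_ℂ := by
      rw [inner_add_right, inner_add_left, inner_smul_right, inner_smul_left,
        aux_symm ((hHherm t ht).add (hδherm t ht))]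
      simp [Complex.conj_I, inner_add_right]
      ring
    rw [hval] at hdr
    have h2 := (RCLike.reCLM (K := ℂ)).hasFDerivAt.comp_hasDerivAt t hdr
    simp only [Function.comp_def, RCLike.reCLM_apply] at h2
    have h3 : RCLike.re (K := ℂ) (⟪g t, b t⟫_ℂ + ⟪b t, g t⟫_ℂ)
        = 2 * RCLike.re (K := ℂ) ⟪g t, b t⟫_ℂ := by
      rw [map_add, ← inner_conj_symm (g t) (b t)]
      rw [RCLike.conj_re]
      ring
    rw [h3] at h2
    exact h2
  have hfin : ∀ ε : ℝ, 0 < ε → ‖g τ‖ ≤ C * τ + ε := by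
    intro ε hε
    set F : ℝ → ℝ := fun s => RCLike.re (K := ℂ) ⟪g s, g s⟫_ℂ with hF_def
    have hFnn : ∀ s, F s = ‖g s‖ ^ 2 := fun s => inner_self_eq_norm_sq (𝕜 := ℂ) (g s)
    set φ : ℝ → ℝ := fun s => Real.sqrt (F s + ε ^ 2) with hφ_def
    have hFpos : ∀ s, 0 < F s + ε ^ 2 := by
      intro s; rw [hFnn]; positivity
    have hgle : ∀ s, ‖g s‖ ≤ Real.sqrt (F s + ε ^ 2) := by
      intro s
      rw [← Real.sqrt_sq (norm_nonneg (g s))]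
      apply Real.sqrt_le_sqrt
      rw [← hFnn s]
      nlinarith [sq_nonneg ε]
    have hφderiv : ∀ t ∈ Set.Icc (0 : ℝ) τ, HasDerivAt φ
        ((2 * RCLike.re (K := ℂ) ⟪g t, b t⟫_ℂ) / (2 * Real.sqrt (F t + ε ^ 2))) t := by
      intro t ht
      have h1 : HasDerivAt (fun s => F s + ε ^ 2) (2 * RCLike.re (K := ℂ) ⟪g t, b t⟫_ℂ) t :=
        (hh t ht).add_const _
      have h2 := (Real.hasDerivAt_sqrt (ne_of_gt (hFpos t))).comp t h1
      refine h2.congr_deriv ?_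
      ring
    have hφbound : ∀ t ∈ Set.Ico (0 : ℝ) τ,
        ‖(2 * RCLike.re (K := ℂ) ⟪g t, b t⟫_ℂ) / (2 * Real.sqrt (F t + ε ^ 2))‖ ≤ C := by
      intro t ht
      have ht' : t ∈ Set.Icc (0 : ℝ) τ := Set.mem_Icc_of_Ico ht
      have hs : 0 < Real.sqrt (F t + ε ^ 2) := Real.sqrt_pos.mpr (hFpos t)
      have h1 : |RCLike.re (K := ℂ) ⟪g t, b t⟫_ℂ| ≤ ‖g t‖ * ‖b t‖ :=
        le_trans (RCLike.abs_re_le_norm _) (norm_inner_le_norm _ _)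
      have h2 : ‖g t‖ * ‖b t‖ ≤ Real.sqrt (F t + ε ^ 2) * C :=
        mul_le_mul (hgle t) (hbnorm t ht') (norm_nonneg _) (Real.sqrt_nonneg _)
      rw [Real.norm_eq_abs, abs_div, div_le_iff₀ (by positivity)]
      have h4 : |(2 : ℝ) * Real.sqrt (F t + ε ^ 2)| = 2 * Real.sqrt (F t + ε ^ 2) :=
        abs_of_pos (by positivity)
      rw [h4, abs_mul, abs_two]
      nlinarith [h1, h2]
    have hφcont : ContinuousOn φ (Set.Icc 0 τ) :=
      fun t ht => (hφderiv t ht).continuousAt.continuousWithinAt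
    have hseg := norm_image_sub_le_of_norm_deriv_right_le_segment hφcont
      (fun t ht => (hφderiv t (Set.mem_Icc_of_Ico ht)).hasDerivWithinAt) hφbound τ
      (Set.right_mem_Icc.mpr hτ)
    have hg0 : g 0 = 0 := by rw [hg_def]; simp [hinit]
    have hφ0 : φ 0 = ε := by
      rw [hφ_def]
      simp only [hFnn, hg0, norm_zero]
      rw [zero_pow (by norm_num), zero_add, Real.sqrt_sq (le_of_lt hε)]
    rw [hφ0, Real.norm_eq_abs] at hseg
    have h5 : φ τ ≤ ε + C * τ := by
      have := abs_le.mp hseg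
      linarith [this.2]
    calc ‖g τ‖ ≤ φ τ := hgle τ
      _ ≤ C * τ + ε := by linarith
  have hfinal : ‖g τ‖ ≤ C * τ := by
    refine le_of_forall_pos_le_add ?_
    intro ε hε
    exact hfin ε hε
  calc ‖ψ τ - ψt τ‖ = ‖g τ‖ := by simp only [hg_def]; rw [norm_sub_rev]
    _ ≤ C * τ := hfinal
    _ = τ * g_max * (Real.sqrt ((d : ℝ) * (Module.finrank ℂ X) / N) + η) := by
        rw [hC_def, hc_def]; ring
end

section
/- For n qubits and a natural number θ with 1 ≤ θ ≤ n/2, the variance of the θ-Hamiltonian H₁^θ in the uniform superposition state u = 2^{−n/2} Σ_{j=0}^{2^n−1} e_j satisfies ⟨u, (H₁^θ)² u⟩ − ⟨u, H₁^θ u⟩² ≤ 2 θ² e^{−(n/2 − θ)²/n}. -/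
def hammingWeight (j : ℕ) : ℕ := (Nat.digits 2 j).sum

lemma hw_two_mul (i : ℕ) : hammingWeight (2*i) = hammingWeight i := by
  rcases Nat.eq_zero_or_pos i with h | h
  · simp [h, hammingWeight]
  · unfold hammingWeight
    rw [Nat.digits_def' (by norm_num : 1 < 2) (by omega)]
    simp [Nat.mul_div_cancel_left _ (by norm_num : 0 < 2), Nat.mul_mod_right]

lemma hw_two_mul_add_one (i : ℕ) : hammingWeight (2*i+1) = hammingWeight i + 1 := by
  unfold hammingWeight
  rw [Nat.digits_def' (by norm_num : 1 < 2) (by omega)]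
  have h1 : (2*i+1) % 2 = 1 := by omega
  have h2 : (2*i+1) / 2 = i := by omega
  rw [h1, h2]
  simp [Nat.add_comm]

lemma sum_range_two_mul {M : Type*} [AddCommMonoid M] (N : ℕ) (f : ℕ → M) :
    ∑ j ∈ Finset.range (2*N), f j = ∑ i ∈ Finset.range N, (f (2*i) + f (2*i+1)) := by
  induction N with
  | zero => simp
  | succ N ih =>
    have : 2*(N+1) = (2*N) + 1 + 1 := by ring
    rw [this, Finset.sum_range_succ, Finset.sum_range_succ, ih, Finset.sum_range_succ]
    ring_nf
    rw [add_assoc]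

lemma sum_pow_hw (n : ℕ) (x : ℝ) :
    ∑ j ∈ Finset.range (2^n), x ^ (hammingWeight j) = (1+x)^n := by
  induction n with
  | zero => simp [hammingWeight]
  | succ n ih =>
    have : (2:ℕ)^(n+1) = 2 * 2^n := by ring
    rw [this, sum_range_two_mul]
    simp only [hw_two_mul, hw_two_mul_add_one, pow_succ]
    rw [← ih, Finset.sum_mul]
    exact Finset.sum_congr rfl fun i _ => by ring

lemma diag_dot (n : ℕ) (v : Fin (2^n) → ℝ) :
    (dotProduct (star (fun _ : Fin (2^n) => ((Real.sqrt (2 ^ n))⁻¹ : ℂ)))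
      ((Matrix.diagonal (fun j => (v j : ℂ))).mulVec (fun _ => ((Real.sqrt (2 ^ n))⁻¹ : ℂ)))).re
    = (∑ j, v j) / 2^n := by
  have hr : (Real.sqrt (2 ^ n))⁻¹ * (Real.sqrt (2 ^ n))⁻¹ = ((2:ℝ)^n)⁻¹ := by
    rw [← mul_inv, Real.mul_self_sqrt (by positivity)]
  have : (dotProduct (star (fun _ : Fin (2^n) => ((Real.sqrt (2 ^ n))⁻¹ : ℂ)))
      ((Matrix.diagonal (fun j => (v j : ℂ))).mulVec (fun _ => ((Real.sqrt (2 ^ n))⁻¹ : ℂ))))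
      = ((∑ j, (Real.sqrt (2 ^ n))⁻¹ * (v j * (Real.sqrt (2 ^ n))⁻¹) : ℝ) : ℂ) := by
    simp only [dotProduct, Matrix.mulVec_diagonal, Pi.star_apply, Complex.ofReal_sum]
    refine Finset.sum_congr rfl fun j _ => ?_
    push_cast
    rw [Complex.star_def, ← Complex.ofReal_inv, Complex.conj_ofReal]
  rw [this, Complex.ofReal_re, Finset.sum_div]
  refine Finset.sum_congr rfl fun j _ => ?_
  rw [← mul_assoc, mul_comm ((Real.sqrt (2 ^ n))⁻¹) (v j), mul_assoc, hr]
  field_simp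

set_option maxHeartbeats 2000000 in
/-- for `1 ≤ θ ≤ n/2`, the variance of the θ-Hamiltonian
`H₁^θ = diag(min(θ, h(j)))` in the uniform superposition `u` satisfies
`⟨u, (H₁^θ)² u⟩ − ⟨u, H₁^θ u⟩² ≤ 2 θ² e^{−(n/2 − θ)²/n}`. -/
theorem stmt_13 (n θ : ℕ) (hθ1 : 1 ≤ θ) (hθ2 : (θ : ℝ) ≤ n / 2)
    (Hθ : Matrix (Fin (2 ^ n)) (Fin (2 ^ n)) ℂ)
    (hHθ : Hθ = Matrix.diagonal (fun j : Fin (2 ^ n) =>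
      ((min θ (hammingWeight (j : ℕ)) : ℕ) : ℂ)))
    (u : Fin (2 ^ n) → ℂ)
    (hu : u = fun _ => ((Real.sqrt (2 ^ n))⁻¹ : ℂ)) :
    (dotProduct (star u) ((Hθ * Hθ).mulVec u)).re
        - ((dotProduct (star u) (Hθ.mulVec u)).re) ^ 2
      ≤ 2 * (θ : ℝ) ^ 2 * Real.exp (-((n : ℝ) / 2 - θ) ^ 2 / n) := by
  -- setup
  set g : Fin (2^n) → ℝ := fun j => ((min θ (hammingWeight (j : ℕ)) : ℕ) : ℝ) with hg
  have hH1 : Hθ = Matrix.diagonal (fun j => ((g j : ℝ) : ℂ)) := by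
    rw [hHθ]; congr 1
  have hH2 : Hθ * Hθ = Matrix.diagonal (fun j => ((g j * g j : ℝ) : ℂ)) := by
    rw [hH1, Matrix.diagonal_mul_diagonal]
    congr 1; funext j; push_cast; ring
  subst hu
  rw [hH2, hH1, diag_dot, diag_dot]
  -- basic facts
  have h1θ : (1:ℝ) ≤ θ := by exact_mod_cast hθ1
  have hn2 : (2:ℝ) ≤ n := by linarith
  have hn0 : (0:ℝ) < n := by linarith
  have hN : (0:ℝ) < 2^n := by positivity
  have hg0 : ∀ j, 0 ≤ g j := fun j => Nat.cast_nonneg _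
  have hgθ : ∀ j, g j ≤ θ := fun j => by
    simp only [hg]; exact_mod_cast Nat.cast_le.mpr (min_le_left _ _)
  set E1 : ℝ := (∑ j, g j) / 2^n with hE1
  have hE1θ : E1 ≤ θ := by
    rw [hE1, div_le_iff₀ hN]
    calc ∑ j, g j ≤ ∑ j : Fin (2^n), (θ:ℝ) := Finset.sum_le_sum fun j _ => hgθ j
    _ = (θ:ℝ) * 2^n := by simp [Finset.sum_const, mul_comm]
  have hE10 : 0 ≤ E1 := by positivity
  -- variance ≤ θ (θ - E1)
  have hS2 : (∑ j, g j * g j) / 2^n ≤ (θ:ℝ) * E1 := by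
    rw [hE1, ← mul_div_assoc, div_le_div_iff_of_pos_right hN, Finset.mul_sum]
    exact Finset.sum_le_sum fun j _ => mul_le_mul_of_nonneg_right (hgθ j) (hg0 j)
  have hvar : (∑ j, g j * g j) / 2^n - E1^2 ≤ (θ:ℝ) * ((θ:ℝ) - E1) := by
    nlinarith [sq_nonneg ((θ:ℝ) - E1)]
  -- Hoeffding-type bound on θ - E1
  set d : ℝ := (n:ℝ)/2 - (θ:ℝ) + 1 with hd
  have hd1 : 1 ≤ d := by simp [hd]; linarith
  set t : ℝ := 4*d/n with ht
  have ht0 : 0 ≤ t := by positivity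
  set m : ℝ := (θ:ℝ) - 1 with hm
  have hpt : ∀ j : Fin (2^n), (θ:ℝ) - g j ≤ (θ:ℝ) * Real.exp (t * (m - (hammingWeight (j:ℕ) : ℝ))) := by
    intro j
    rcases le_or_gt θ (hammingWeight (j:ℕ)) with h | h
    · have : g j = θ := by
        have hmin := min_eq_left h
        simp only [hg]; rw [hmin]
      rw [this]; simp only [sub_self]; positivity
    · have hh : (hammingWeight (j:ℕ) : ℝ) ≤ m := by
        rw [hm]; have : (hammingWeight (j:ℕ) : ℝ) + 1 ≤ θ := by exact_mod_cast h
        linarith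
      have h1 : (1:ℝ) ≤ Real.exp (t * (m - (hammingWeight (j:ℕ) : ℝ))) := by
        apply Real.one_le_exp
        exact mul_nonneg ht0 (by linarith)
      calc (θ:ℝ) - g j ≤ (θ:ℝ) := by linarith [hg0 j]
      _ ≤ (θ:ℝ) * Real.exp (t * (m - _)) := le_mul_of_one_le_right (by positivity) h1
  have hsum : ∑ j : Fin (2^n), Real.exp (t * (m - (hammingWeight (j:ℕ) : ℝ)))
      = Real.exp (t*m) * (1 + Real.exp (-t))^n := by
    rw [← sum_pow_hw n (Real.exp (-t)), Finset.mul_sum,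
      ← Fin.sum_univ_eq_sum_range (fun j => Real.exp (t*m) * (Real.exp (-t))^(hammingWeight j))]
    refine Finset.sum_congr rfl fun j _ => ?_
    rw [← Real.exp_nat_mul, ← Real.exp_add]
    congr 1; ring
  have hbase : (1 + Real.exp (-t))^n ≤ 2^n * Real.exp (n * (-t/2 + t^2/8)) := by
    have h1 : 1 + Real.exp (-t) ≤ 2 * Real.exp (-t/2 + t^2/8) := by
      have hc : Real.cosh (t/2) ≤ Real.exp ((t/2)^2/2) := Real.cosh_le_exp_half_sq _
      have he : 1 + Real.exp (-t) = 2 * Real.exp (-t/2) * Real.cosh (t/2) := by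
        have e1 : Real.exp (-t/2) * Real.exp (t/2) = 1 := by
          rw [← Real.exp_add, show -t/2 + t/2 = 0 by ring, Real.exp_zero]
        have e2 : Real.exp (-t/2) * Real.exp (-(t/2)) = Real.exp (-t) := by
          rw [← Real.exp_add]; congr 1; ring
        rw [Real.cosh_eq,
          show 2 * Real.exp (-t/2) * ((Real.exp (t/2) + Real.exp (-(t/2)))/2)
            = Real.exp (-t/2) * Real.exp (t/2) + Real.exp (-t/2) * Real.exp (-(t/2)) by ring,
          e1, e2]
      rw [he, mul_assoc]
      calc 2 * (Real.exp (-t/2) * Real.cosh (t/2))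
          ≤ 2 * (Real.exp (-t/2) * Real.exp ((t/2)^2/2)) := by
            gcongr
        _ = 2 * Real.exp (-t/2 + t^2/8) := by
            rw [← Real.exp_add, show -t/2 + (t/2)^2/2 = -t/2 + t^2/8 by ring]
    calc (1 + Real.exp (-t))^n ≤ (2 * Real.exp (-t/2 + t^2/8))^n := by
          gcongr
      _ = 2^n * Real.exp (n * (-t/2 + t^2/8)) := by
          rw [mul_pow, ← Real.exp_nat_mul]
  have hexp : t*m + n * (-t/2 + t^2/8) = -2*d^2/n := by
    rw [ht, hm, hd]; field_simp; ring
  have hkey : (θ:ℝ) - E1 ≤ (θ:ℝ) * Real.exp (-2*d^2/n) := by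
    have hsum2 : ∑ j : Fin (2^n), ((θ:ℝ) - g j)
        ≤ (θ:ℝ) * (2^n * Real.exp (-2*d^2/n)) := by
      calc ∑ j : Fin (2^n), ((θ:ℝ) - g j)
          ≤ ∑ j : Fin (2^n), (θ:ℝ) * Real.exp (t * (m - (hammingWeight (j:ℕ) : ℝ))) :=
            Finset.sum_le_sum fun j _ => hpt j
        _ = (θ:ℝ) * (Real.exp (t*m) * (1 + Real.exp (-t))^n) := by
            rw [← Finset.mul_sum, hsum]
        _ ≤ (θ:ℝ) * (Real.exp (t*m) * (2^n * Real.exp (n * (-t/2 + t^2/8)))) := by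
            gcongr
        _ = (θ:ℝ) * (2^n * Real.exp (t*m + n * (-t/2 + t^2/8))) := by
            rw [Real.exp_add]; ring
        _ = (θ:ℝ) * (2^n * Real.exp (-2*d^2/n)) := by rw [hexp]
    have : ∑ j : Fin (2^n), ((θ:ℝ) - g j) = 2^n * ((θ:ℝ) - E1) := by
      rw [Finset.sum_sub_distrib, Finset.sum_const, Finset.card_univ, Fintype.card_fin, hE1]
      field_simp
      ring
    rw [this] at hsum2
    have := (mul_le_mul_iff_right₀ hN).mp (by linarith [hsum2] : (2:ℝ)^n * ((θ:ℝ) - E1) ≤ 2^n * ((θ:ℝ) * Real.exp (-2*d^2/n)))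
    linarith
  -- conclude
  have hfin : -2*d^2/n ≤ -((n : ℝ) / 2 - θ) ^ 2 / n := by
    have hc0 : 0 ≤ (n:ℝ)/2 - θ := by linarith
    have h2d : ((n:ℝ)/2 - θ)^2 ≤ 2*d^2 := by nlinarith
    have := (div_le_div_iff_of_pos_right hn0).mpr (show -2*d^2 ≤ -((n:ℝ)/2 - θ)^2 by nlinarith)
    exact this
  calc (∑ j, g j * g j) / 2^n - E1^2 ≤ (θ:ℝ) * ((θ:ℝ) - E1) := hvar
    _ ≤ (θ:ℝ) * ((θ:ℝ) * Real.exp (-2*d^2/n)) := by gcongr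
    _ ≤ (θ:ℝ) * ((θ:ℝ) * Real.exp (-((n : ℝ) / 2 - θ) ^ 2 / n)) := by gcongr
    _ ≤ 2 * (θ:ℝ)^2 * Real.exp (-((n : ℝ) / 2 - θ) ^ 2 / n) := by
        nlinarith [mul_nonneg (mul_nonneg (Nat.cast_nonneg θ : (0:ℝ) ≤ θ) (Nat.cast_nonneg θ : (0:ℝ) ≤ θ)) (Real.exp_pos (-((n : ℝ) / 2 - θ) ^ 2 / n)).le]
end

section
/- For all natural numbers n ≥ 1 and θ with θ ≤ n/2, the binomial tail satisfies 2^{−n} Σ_{k=0}^{θ−1} C(n,k) ≤ e^{−(n/2 − θ)²/n}. -/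
/-- for `n ≥ 1` and `θ ≤ n/2`, the binomial tail satisfies
`2^{−n} Σ_{k=0}^{θ−1} C(n,k) ≤ e^{−(n/2 − θ)²/n}`. -/
theorem stmt_18 (n θ : ℕ) (hn : 1 ≤ n) (hθ : (θ : ℝ) ≤ (n : ℝ) / 2) :
    (∑ k ∈ Finset.range θ, (n.choose k : ℝ)) / 2 ^ n
      ≤ Real.exp (-((n : ℝ) / 2 - θ) ^ 2 / n) := by
  have hn0 : (0:ℝ) < n := by exact_mod_cast hn
  set a : ℝ := (n:ℝ)/2 - θ with ha_def
  have ha : 0 ≤ a := by simp [ha_def]; linarith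
  set t : ℝ := 4*a/(n:ℝ) with ht_def
  have ht : 0 ≤ t := by positivity
  have hθn : θ ≤ n := by
    have : (θ:ℝ) ≤ (n:ℝ) := by linarith
    exact_mod_cast this
  -- Step 1: bound the partial sum by the full exponentially weighted sum
  have h1 : (∑ k ∈ Finset.range θ, (n.choose k : ℝ))
      ≤ ∑ k ∈ Finset.range (n+1), (n.choose k : ℝ) * Real.exp (t*((θ:ℝ) - k)) := by
    calc (∑ k ∈ Finset.range θ, (n.choose k : ℝ))
        ≤ ∑ k ∈ Finset.range θ, (n.choose k : ℝ) * Real.exp (t*((θ:ℝ) - k)) := by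
          apply Finset.sum_le_sum
          intro k hk
          have hk' : (k:ℝ) ≤ (θ:ℝ) := by
            have h := (Finset.mem_range.mp hk).le
            exact_mod_cast h
          have : (1:ℝ) ≤ Real.exp (t*((θ:ℝ) - k)) := by
            rw [show (1:ℝ) = Real.exp 0 by simp]
            apply Real.exp_le_exp.mpr
            nlinarith
          nlinarith [(Nat.cast_nonneg (n.choose k) : (0:ℝ) ≤ (n.choose k : ℝ))]
      _ ≤ ∑ k ∈ Finset.range (n+1), (n.choose k : ℝ) * Real.exp (t*((θ:ℝ) - k)) := by
          apply Finset.sum_le_sum_of_subset_of_nonneg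
          · exact Finset.range_subset_range.mpr (by omega)
          · intro k _ _
            positivity
  -- Step 2: evaluate via the binomial theorem
  have h2 : ∑ k ∈ Finset.range (n+1), (n.choose k : ℝ) * Real.exp (t*((θ:ℝ) - k))
      = Real.exp (t*θ) * (Real.exp (-t) + 1)^n := by
    rw [add_pow, Finset.mul_sum]
    apply Finset.sum_congr rfl
    intro k _
    have : t*((θ:ℝ) - k) = t*θ + (k:ℝ)*(-t) := by ring
    rw [this, Real.exp_add, Real.exp_nat_mul]
    ring
  -- Step 3: cosh bound
  have h3 : (Real.exp (-t) + 1) ≤ 2 * Real.exp (t^2/8 - t/2) := by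
    have hc := Real.cosh_le_exp_half_sq (t/2)
    rw [Real.cosh_eq] at hc
    have he : Real.exp (-t) + 1 = Real.exp (-(t/2)) * (Real.exp (-(t/2)) + Real.exp (t/2)) := by
      rw [mul_add, ← Real.exp_add, ← Real.exp_add,
        show -(t/2) + -(t/2) = -t by ring, show -(t/2) + t/2 = 0 by ring, Real.exp_zero]
    rw [he]
    have : Real.exp (-(t/2)) + Real.exp (t/2) ≤ 2 * Real.exp ((t/2)^2/2) := by linarith
    calc Real.exp (-(t/2)) * (Real.exp (-(t/2)) + Real.exp (t/2))
        ≤ Real.exp (-(t/2)) * (2 * Real.exp ((t/2)^2/2)) := by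
          apply mul_le_mul_of_nonneg_left this (Real.exp_nonneg _)
      _ = 2 * Real.exp (t^2/8 - t/2) := by
          rw [mul_comm, mul_assoc, ← Real.exp_add]; ring_nf
  -- Combine
  have h4 : (∑ k ∈ Finset.range θ, (n.choose k : ℝ)) / 2 ^ n
      ≤ Real.exp (t*θ) * Real.exp (t^2/8 - t/2)^n := by
    rw [div_le_iff₀ (by positivity)]
    calc (∑ k ∈ Finset.range θ, (n.choose k : ℝ))
        ≤ Real.exp (t*θ) * (Real.exp (-t) + 1)^n := h2 ▸ h1
      _ ≤ Real.exp (t*θ) * (2 * Real.exp (t^2/8 - t/2))^n := by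
          apply mul_le_mul_of_nonneg_left _ (Real.exp_nonneg _)
          exact pow_le_pow_left₀ (by positivity) h3 n
      _ = Real.exp (t*θ) * Real.exp (t^2/8 - t/2)^n * 2^n := by
          rw [mul_pow]; ring
  refine h4.trans ?_
  rw [← Real.exp_nat_mul, ← Real.exp_add]
  apply Real.exp_le_exp.mpr
  have hth : (θ:ℝ) = (n:ℝ)/2 - a := by simp [ha_def]
  have htv : t * (n:ℝ) = 4*a := by
    rw [ht_def, div_mul_cancel₀ _ hn0.ne']
  have h5 : t*θ + (n:ℝ)*(t^2/8 - t/2) = -2*a^2/n := by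
    rw [hth]
    field_simp [ht_def]
    linear_combination (2*t*(n:ℝ) - 8*a) * htv
  rw [h5]
  have h6 := mul_le_mul_of_nonneg_right (show -2*a^2 ≤ -a^2 by nlinarith [sq_nonneg a])
    (inv_nonneg.mpr hn0.le)
  simpa [div_eq_mul_inv] using h6
end
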